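/- arXiv:2211.10200 — 3 statements merged into one kernel-verified Lean document; each statement's English description precedes it below -/
import Mathlib

section
/- Suppose h ∈ 𝓗. Then for every ϑ ∈ (ϑ₀, ϑ₀ + δ], the Kullback–Leibler divergence J is twice differentiable at ϑ with J″(ϑ) = (S·(S + h)·κ²/δ)·∫_{0}^{1 − (ϑ − ϑ₀)/δ} x^{κ−1}·(x + (ϑ − ϑ₀)/δ)^{κ−1}/(S·x^κ + λ₀) dx; moreover, for every ϑ ∈ Θ with ϑ < ϑ₀ − δ or ϑ > ϑ₀ + δ, J is twice differentiable at ϑ with J″(ϑ) = 0. -/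
open MeasureTheory Real Set Filter

/-- The cusp signal shape: `ψ(x) = (x/δ)^κ` for `0 < x < δ`, `1` for `x ≥ δ`, `0` for `x ≤ 0`. -/
noncomputable def psi (δ κ : ℝ) (x : ℝ) : ℝ :=
  if δ ≤ x then 1 else if 0 < x then (x / δ) ^ κ else 0

/-- Theoretical intensity `λ(ϑ, t) = S ψ(t − ϑ) + λ₀`. -/
noncomputable def lamT (S lam0 δ κ : ℝ) (ϑ t : ℝ) : ℝ :=
  S * psi δ κ (t - ϑ) + lam0

/-- Real intensity `λ*(ϑ₀, t) = (S + h) ψ(t − ϑ₀) + λ₀`. -/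
noncomputable def lamR (S h lam0 δ κ : ℝ) (ϑ₀ t : ℝ) : ℝ :=
  (S + h) * psi δ κ (t - ϑ₀) + lam0

/-- The Kullback–Leibler divergence `J(ϑ)`. -/
noncomputable def JKL (S h lam0 δ κ τ ϑ₀ : ℝ) (ϑ : ℝ) : ℝ :=
  ∫ t in (min ϑ ϑ₀)..τ,
    (lamT S lam0 δ κ ϑ t / lamR S h lam0 δ κ ϑ₀ t - 1 -
      Real.log (lamT S lam0 δ κ ϑ t / lamR S h lam0 δ κ ϑ₀ t)) *
      lamR S h lam0 δ κ ϑ₀ t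


/-- a.e. derivative of `psi` (left-continuous convention at `δ`). -/
noncomputable def psid (δ κ : ℝ) (z : ℝ) : ℝ :=
  if 0 < z ∧ z ≤ δ then (κ / δ) * (z / δ) ^ (κ - 1) else 0

noncomputable def phi (S lam0 δ κ : ℝ) (u : ℝ) : ℝ :=
  S * psid δ κ u / (S * psi δ κ u + lam0)

section Aux

variable {S lam0 δ κ : ℝ}

lemma psi_of_nonpos (hδ : 0 < δ) {x : ℝ} (hx : x ≤ 0) : psi δ κ x = 0 := by
  unfold psi
  rw [if_neg (by linarith), if_neg (by linarith)]

lemma psi_of_ge {x : ℝ} (hx : δ ≤ x) : psi δ κ x = 1 := by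
  unfold psi; rw [if_pos hx]

lemma psi_eq_rpow (hδ : 0 < δ) (hκ : κ ≠ 0) {x : ℝ} (h0 : 0 ≤ x) (h1 : x ≤ δ) :
    psi δ κ x = (x / δ) ^ κ := by
  unfold psi
  rcases eq_or_lt_of_le h1 with rfl | h1
  · rw [if_pos le_rfl, div_self hδ.ne', Real.one_rpow]
  · rw [if_neg (by linarith)]
    rcases eq_or_lt_of_le h0 with rfl | h0
    · rw [if_neg (lt_irrefl _), zero_div, Real.zero_rpow hκ]
    · rw [if_pos h0]

lemma psi_nonneg (hδ : 0 < δ) (x : ℝ) : 0 ≤ psi δ κ x := by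
  unfold psi
  split_ifs with h1 h2
  · norm_num
  · exact Real.rpow_nonneg (by positivity) _
  · exact le_rfl

lemma psi_le_one (hδ : 0 < δ) (hκ : 0 ≤ κ) (x : ℝ) : psi δ κ x ≤ 1 := by
  unfold psi
  split_ifs with h1 h2
  · exact le_rfl
  · exact Real.rpow_le_one (by positivity) (by rw [div_le_one hδ]; linarith) hκ
  · norm_num

lemma psi_rep (hδ : 0 < δ) (hκ : κ ≠ 0) (x : ℝ) :
    psi δ κ x = (min (max x 0) δ / δ) ^ κ := by
  rcases le_or_gt x 0 with h | h
  · rw [psi_of_nonpos hδ h, max_eq_right h, min_eq_left hδ.le, zero_div,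
      Real.zero_rpow hκ]
  · rcases le_or_gt δ x with h2 | h2
    · rw [psi_of_ge h2, min_eq_right (by rw [max_eq_left h.le]; exact h2),
        div_self hδ.ne', Real.one_rpow]
    · rw [psi_eq_rpow hδ hκ h.le h2.le, max_eq_left h.le, min_eq_left h2.le]

lemma continuous_psi (hδ : 0 < δ) (hκ0 : 0 < κ) : Continuous (psi δ κ) := by
  have : psi δ κ = fun x => (min (max x 0) δ / δ) ^ κ := funext (psi_rep hδ hκ0.ne')
  rw [this]
  apply continuous_iff_continuousAt.2
  intro x
  exact (Real.continuousAt_rpow_const _ _ (Or.inr hκ0.le)).comp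
    (((continuous_id.max continuous_const).min continuous_const).div_const δ).continuousAt

lemma measurable_psi : Measurable (psi δ κ) := by
  unfold psi
  exact Measurable.ite (measurableSet_le measurable_const measurable_id) (measurable_const)
    (Measurable.ite (measurableSet_lt measurable_const measurable_id)
      ((measurable_id.div_const δ).pow_const κ) measurable_const)

lemma measurable_psid : Measurable (psid δ κ) := by
  unfold psid
  have hs : MeasurableSet {z : ℝ | 0 < z ∧ z ≤ δ} := by
    have : {z : ℝ | 0 < z ∧ z ≤ δ} = Ioc 0 δ := rfl
    rw [this]; exact measurableSet_Ioc
  exact Measurable.ite hs (((measurable_id.div_const δ).pow_const (κ - 1)).const_mul _)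
    measurable_const

lemma psid_nonneg (hδ : 0 < δ) (hκ0 : 0 < κ) (z : ℝ) : 0 ≤ psid δ κ z := by
  unfold psid
  split_ifs with h1
  · obtain ⟨hz, -⟩ := h1
    have h2 : (0:ℝ) < z / δ := by positivity
    exact mul_nonneg (by positivity) (Real.rpow_nonneg h2.le _)
  · exact le_rfl

lemma psid_of_nonpos (hδ : 0 < δ) {z : ℝ} (hz : z ≤ 0) : psid δ κ z = 0 := by
  unfold psid; rw [if_neg (by rintro ⟨h1, h2⟩; linarith)]

lemma psid_of_gt {z : ℝ} (hz : δ < z) : psid δ κ z = 0 := by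
  unfold psid; rw [if_neg (by rintro ⟨h1, h2⟩; linarith)]

lemma psid_eq {z : ℝ} (h0 : 0 < z) (h1 : z ≤ δ) :
    psid δ κ z = (κ / δ) * (z / δ) ^ (κ - 1) := by
  unfold psid; rw [if_pos ⟨h0, h1⟩]

/-- monotone upper bound for `psid` away from `0`. -/
lemma psid_le (hδ : 0 < δ) (hκ0 : 0 < κ) (hκ1 : κ < 1) {c z : ℝ} (hc : 0 < c) (hz : c ≤ z) :
    psid δ κ z ≤ (κ / δ) * (c / δ) ^ (κ - 1) := by
  rcases le_or_gt z δ with h | h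
  · rw [psid_eq (lt_of_lt_of_le hc hz) h]
    have h1 : (z / δ) ^ (κ - 1) ≤ (c / δ) ^ (κ - 1) :=
      Real.rpow_le_rpow_of_nonpos (by positivity) (by gcongr) (by linarith)
    have h2 : 0 ≤ κ / δ := by positivity
    nlinarith [h1, h2]
  · rw [psid_of_gt h]
    have h2 : (0:ℝ) < c / δ := by positivity
    exact mul_nonneg (by positivity) (Real.rpow_nonneg h2.le _)

lemma psid_indicator (hδ : 0 < δ) : psid δ κ =
    Set.indicator (Ioc 0 δ) (fun z => (κ / δ) * (z / δ) ^ (κ - 1)) := by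
  funext z
  unfold psid
  by_cases h : z ∈ Ioc 0 δ
  · rw [Set.indicator_of_mem h, if_pos ⟨h.1, h.2⟩]
  · rw [Set.indicator_of_notMem h, if_neg (by exact fun hc => h ⟨hc.1, hc.2⟩)]

lemma integrable_psid (hδ : 0 < δ) (hκ0 : 0 < κ) : Integrable (psid δ κ) := by
  rw [psid_indicator hδ]
  apply MeasureTheory.IntegrableOn.integrable_indicator _ measurableSet_Ioc
  have h1 : IntervalIntegrable (fun z : ℝ => z ^ (κ - 1)) volume 0 δ :=
    intervalIntegral.intervalIntegrable_rpow' (by linarith)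
  have h2 : IntegrableOn (fun z : ℝ => z ^ (κ - 1)) (Ioc 0 δ) := by
    rw [← intervalIntegrable_iff_integrableOn_Ioc_of_le hδ.le]; exact h1
  have h3 : IntegrableOn (fun z : ℝ => (κ / δ) * (δ ^ (1 - κ) * z ^ (κ - 1))) (Ioc 0 δ) :=
    (h2.const_mul _).const_mul _
  apply h3.congr_fun _ measurableSet_Ioc
  intro z hz
  have hz0 : (0:ℝ) < z := hz.1
  have hd : (δ:ℝ) ^ (1 - κ) = (δ ^ (κ - 1))⁻¹ := by
    rw [← Real.rpow_neg hδ.le]; congr 1; ring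
  simp only [Real.div_rpow hz0.le hδ.le, hd]
  ring

lemma hasDerivAt_psi (hδ : 0 < δ) (hκ0 : 0 < κ) {x : ℝ} (h0 : 0 < x) (h1 : x < δ) :
    HasDerivAt (psi δ κ) (psid δ κ x) x := by
  have hne : x / δ ≠ 0 := by positivity
  have hB : HasDerivAt (fun y : ℝ => (y / δ) ^ κ) (κ * (x / δ) ^ (κ - 1) * (1 / δ)) x :=
    by have := (Real.hasDerivAt_rpow_const (p := κ) (Or.inl hne)).comp x ((hasDerivAt_id x).div_const δ); exact this
  have heq : psi δ κ =ᶠ[nhds x] fun y => (y / δ) ^ κ := by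
    filter_upwards [Ioo_mem_nhds h0 h1] with y hy
    exact psi_eq_rpow hδ hκ0.ne' hy.1.le hy.2.le
  have := hB.congr_of_eventuallyEq heq
  exact this.congr_deriv (by rw [psid_eq h0 h1.le]; ring)

lemma psid_primitive_le (hδ : 0 < δ) (hκ0 : 0 < κ) {z : ℝ} (h0 : 0 ≤ z) (h1 : z ≤ δ) :
    ∫ x in (0:ℝ)..z, psid δ κ x = psi δ κ z := by
  have := intervalIntegral.integral_eq_sub_of_hasDeriv_right_of_le h0
    ((continuous_psi hδ hκ0).continuousOn : ContinuousOn (psi δ κ) (Icc 0 z))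
    (fun x hx => (hasDerivAt_psi hδ hκ0 hx.1 (lt_of_lt_of_le hx.2 h1)).hasDerivWithinAt)
    ((integrable_psid hδ hκ0).intervalIntegrable)
  rw [this, psi_of_nonpos hδ le_rfl, sub_zero]

lemma psid_primitive (hδ : 0 < δ) (hκ0 : 0 < κ) (z : ℝ) :
    ∫ x in (0:ℝ)..z, psid δ κ x = psi δ κ z := by
  have hii : ∀ a b : ℝ, IntervalIntegrable (psid δ κ) volume a b :=
    fun a b => (integrable_psid hδ hκ0).intervalIntegrable
  rcases le_or_gt z 0 with hz | hz
  · rw [psi_of_nonpos hδ hz, intervalIntegral.integral_of_ge hz,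
      MeasureTheory.setIntegral_congr_fun measurableSet_Ioc
        (fun x hx => psid_of_nonpos hδ (hx.2 : x ≤ (0:ℝ)))]
    simp
  rcases le_or_gt z δ with hzd | hzd
  · exact psid_primitive_le hδ hκ0 hz.le hzd
  · rw [← intervalIntegral.integral_add_adjacent_intervals (hii 0 δ) (hii δ z),
      psid_primitive_le hδ hκ0 hδ.le le_rfl, psi_of_ge le_rfl, psi_of_ge hzd.le,
      intervalIntegral.integral_of_le hzd.le,
      MeasureTheory.setIntegral_congr_fun measurableSet_Ioc
        (fun x hx => psid_of_gt (hx.1 : δ < x))]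
    simp

lemma psid_integral (hδ : 0 < δ) (hκ0 : 0 < κ) (a b : ℝ) :
    ∫ x in a..b, psid δ κ x = psi δ κ b - psi δ κ a := by
  have hii : ∀ a b : ℝ, IntervalIntegrable (psid δ κ) volume a b :=
    fun a b => (integrable_psid hδ hκ0).intervalIntegrable
  rw [← intervalIntegral.integral_add_adjacent_intervals (hii a 0) (hii 0 b),
    intervalIntegral.integral_symm, psid_primitive hδ hκ0, psid_primitive hδ hκ0]
  ring

lemma denom_pos (hS : 0 < S) (hlam0 : 0 < lam0) (hδ : 0 < δ) (u : ℝ) :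
    0 < S * psi δ κ u + lam0 :=
  add_pos_of_nonneg_of_pos (mul_nonneg hS.le (psi_nonneg hδ u)) hlam0

lemma phi_nonneg (hS : 0 < S) (hlam0 : 0 < lam0) (hδ : 0 < δ) (hκ0 : 0 < κ) (u : ℝ) :
    0 ≤ phi S lam0 δ κ u :=
  div_nonneg (mul_nonneg hS.le (psid_nonneg hδ hκ0 u)) (denom_pos hS hlam0 hδ u).le

lemma phi_le (hS : 0 < S) (hlam0 : 0 < lam0) (hδ : 0 < δ) (hκ0 : 0 < κ) (u : ℝ) :
    phi S lam0 δ κ u ≤ (S / lam0) * psid δ κ u := by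
  unfold phi
  have h1 : S * psid δ κ u / (S * psi δ κ u + lam0) ≤ S * psid δ κ u / lam0 :=
    div_le_div_of_nonneg_left (mul_nonneg hS.le (psid_nonneg hδ hκ0 u)) hlam0
      (le_add_of_nonneg_left (mul_nonneg hS.le (psi_nonneg hδ u)))
  calc S * psid δ κ u / (S * psi δ κ u + lam0) ≤ S * psid δ κ u / lam0 := h1
    _ = (S / lam0) * psid δ κ u := by ring

lemma phi_of_nonpos (hδ : 0 < δ) {u : ℝ} (hu : u ≤ 0) : phi S lam0 δ κ u = 0 := by
  unfold phi; rw [psid_of_nonpos hδ hu]; simp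

lemma phi_of_gt {u : ℝ} (hu : δ < u) : phi S lam0 δ κ u = 0 := by
  unfold phi; rw [psid_of_gt hu]; simp

lemma measurable_phi : Measurable (phi S lam0 δ κ) :=
  (measurable_psid.const_mul S).div ((measurable_psi.const_mul S).add_const lam0)

lemma integrable_phi (hS : 0 < S) (hlam0 : 0 < lam0) (hδ : 0 < δ) (hκ0 : 0 < κ) :
    Integrable (phi S lam0 δ κ) := by
  apply Integrable.mono' (((integrable_psid hδ hκ0).const_mul (S / lam0)))
    measurable_phi.aestronglyMeasurable
  filter_upwards [] with u
  rw [Real.norm_eq_abs, abs_of_nonneg (phi_nonneg hS hlam0 hδ hκ0 u)]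
  exact phi_le hS hlam0 hδ hκ0 u

lemma hasDerivAt_logdenom (hS : 0 < S) (hlam0 : 0 < lam0) (hδ : 0 < δ) (hκ0 : 0 < κ)
    {x : ℝ} (h0 : 0 < x) (h1 : x < δ) :
    HasDerivAt (fun u => Real.log (S * psi δ κ u + lam0)) (phi S lam0 δ κ x) x := by
  have hinner : HasDerivAt (fun u => S * psi δ κ u + lam0) (S * psid δ κ x) x :=
    ((hasDerivAt_psi hδ hκ0 h0 h1).const_mul S).add_const lam0
  have := (Real.hasDerivAt_log (denom_pos hS hlam0 hδ x).ne').comp x hinner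
  exact this.congr_deriv (by unfold phi; ring)

lemma integral_phi (hS : 0 < S) (hlam0 : 0 < lam0) (hδ : 0 < δ) (hκ0 : 0 < κ) :
    ∫ u in (0:ℝ)..δ, phi S lam0 δ κ u = Real.log (S + lam0) - Real.log lam0 := by
  have hcont : Continuous (fun u => Real.log (S * psi δ κ u + lam0)) :=
    Continuous.log ((continuous_const.mul (continuous_psi hδ hκ0)).add continuous_const)
      (fun u => (denom_pos hS hlam0 hδ u).ne')
  have := intervalIntegral.integral_eq_sub_of_hasDeriv_right_of_le hδ.le
    hcont.continuousOn
    (fun x hx => (hasDerivAt_logdenom hS hlam0 hδ hκ0 hx.1 hx.2).hasDerivWithinAt)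
    ((integrable_phi hS hlam0 hδ hκ0).intervalIntegrable)
  rw [this, psi_of_ge le_rfl, psi_of_nonpos hδ le_rfl]
  norm_num

noncomputable def NN (S lam0 δ κ : ℝ) (s : ℝ) : ℝ :=
  ∫ u in (0:ℝ)..δ, phi S lam0 δ κ u * psi δ κ (s + u)

noncomputable def inn (S lam0 δ κ : ℝ) (σ : ℝ) : ℝ :=
  ∫ u in (0:ℝ)..δ, phi S lam0 δ κ u * psid δ κ (σ + u)

section Aux2

variable {S lam0 δ κ : ℝ}

lemma meas_NNi (s : ℝ) : Measurable (fun u => phi S lam0 δ κ u * psi δ κ (s + u)) :=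
  measurable_phi.mul (measurable_psi.comp (measurable_const.add measurable_id))

lemma meas_inni (σ : ℝ) : Measurable (fun u => phi S lam0 δ κ u * psid δ κ (σ + u)) :=
  measurable_phi.mul (measurable_psid.comp (measurable_const.add measurable_id))

lemma integrable_NN_integrand (hS : 0 < S) (hlam0 : 0 < lam0) (hδ : 0 < δ) (hκ0 : 0 < κ)
    (s : ℝ) : Integrable (fun u => phi S lam0 δ κ u * psi δ κ (s + u)) := by
  apply Integrable.mono' (integrable_phi hS hlam0 hδ hκ0) (meas_NNi s).aestronglyMeasurable
  filter_upwards [] with u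
  rw [Real.norm_eq_abs, abs_mul, abs_of_nonneg (phi_nonneg hS hlam0 hδ hκ0 u),
    abs_of_nonneg (psi_nonneg hδ _)]
  calc phi S lam0 δ κ u * psi δ κ (s + u) ≤ phi S lam0 δ κ u * 1 :=
        mul_le_mul_of_nonneg_left (psi_le_one hδ hκ0.le _) (phi_nonneg hS hlam0 hδ hκ0 u)
    _ = phi S lam0 δ κ u := mul_one _

lemma NN_diff_le (hS : 0 < S) (hlam0 : 0 < lam0) (hδ : 0 < δ) (hκ0 : 0 < κ)
    {s₁ s₂ : ℝ} (h12 : s₁ ≤ s₂) :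
    NN S lam0 δ κ s₂ - NN S lam0 δ κ s₁ = ∫ σ in s₁..s₂, inn S lam0 δ κ σ := by
  have hmeas : Measurable (Function.uncurry fun (u σ : ℝ) => phi S lam0 δ κ u * psid δ κ (σ + u)) := by
    apply Measurable.mul
    · exact measurable_phi.comp measurable_fst
    · exact measurable_psid.comp (measurable_snd.add measurable_fst)
  set μ : Measure ℝ := volume.restrict (Ioc 0 δ)
  set ν : Measure ℝ := volume.restrict (Ioc s₁ s₂)
  have hintg : Integrable (Function.uncurry fun (u σ : ℝ) => phi S lam0 δ κ u * psid δ κ (σ + u))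
      (μ.prod ν) := by
    rw [MeasureTheory.integrable_prod_iff hmeas.aestronglyMeasurable]
    constructor
    · filter_upwards [] with u
      exact ((((integrable_psid hδ hκ0).comp_add_right u).const_mul
        (phi S lam0 δ κ u)).restrict).congr (by filter_upwards [] with σ; rfl)
    · apply Integrable.mono' ((integrable_phi hS hlam0 hδ hκ0).restrict)
      · exact (hmeas.aestronglyMeasurable.norm.integral_prod_right')
      · filter_upwards [MeasureTheory.ae_restrict_mem measurableSet_Ioc] with u hu
        simp only [Function.uncurry_apply_pair]
        have hnn : 0 ≤ ∫ σ, ‖phi S lam0 δ κ u * psid δ κ (σ + u)‖ ∂ν :=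
          integral_nonneg (fun σ => norm_nonneg _)
        rw [Real.norm_eq_abs, abs_of_nonneg hnn]
        have heq : ∀ σ : ℝ, ‖phi S lam0 δ κ u * psid δ κ (σ + u)‖
            = phi S lam0 δ κ u * psid δ κ (σ + u) := by
          intro σ
          rw [Real.norm_eq_abs, abs_mul, abs_of_nonneg (phi_nonneg hS hlam0 hδ hκ0 u),
            abs_of_nonneg (psid_nonneg hδ hκ0 _)]
        simp only [heq]
        have : ∫ σ, phi S lam0 δ κ u * psid δ κ (σ + u) ∂ν
            = phi S lam0 δ κ u * ∫ σ, psid δ κ (σ + u) ∂ν := integral_const_mul _ _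
        rw [this]
        have h2 : ∫ σ, psid δ κ (σ + u) ∂ν = psi δ κ (s₂ + u) - psi δ κ (s₁ + u) := by
          show ∫ σ in Ioc s₁ s₂, psid δ κ (σ + u) = _
          rw [← intervalIntegral.integral_of_le h12,
            intervalIntegral.integral_comp_add_right (psid δ κ) u, psid_integral hδ hκ0]
        rw [h2]
        have h3 : psi δ κ (s₂ + u) - psi δ κ (s₁ + u) ≤ 1 := by
          have := psi_le_one hδ hκ0.le (s₂ + u)
          have := psi_nonneg hδ (s₁ + u) (κ := κ)
          linarith
        have h4 : 0 ≤ phi S lam0 δ κ u := phi_nonneg hS hlam0 hδ hκ0 u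
        nlinarith
  have swap := MeasureTheory.integral_integral_swap hintg
  have lhs : NN S lam0 δ κ s₂ - NN S lam0 δ κ s₁
      = ∫ u, (∫ σ, phi S lam0 δ κ u * psid δ κ (σ + u) ∂ν) ∂μ := by
    unfold NN
    rw [← intervalIntegral.integral_sub (integrable_NN_integrand hS hlam0 hδ hκ0 s₂).intervalIntegrable
      (integrable_NN_integrand hS hlam0 hδ hκ0 s₁).intervalIntegrable]
    rw [intervalIntegral.integral_of_le hδ.le]
    apply MeasureTheory.setIntegral_congr_fun measurableSet_Ioc
    intro u hu
    dsimp only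
    have h2 : ∫ σ, psid δ κ (σ + u) ∂ν = psi δ κ (s₂ + u) - psi δ κ (s₁ + u) := by
      show ∫ σ in Ioc s₁ s₂, psid δ κ (σ + u) = _
      rw [← intervalIntegral.integral_of_le h12,
        intervalIntegral.integral_comp_add_right (psid δ κ) u, psid_integral hδ hκ0]
    have : ∫ σ, phi S lam0 δ κ u * psid δ κ (σ + u) ∂ν
        = phi S lam0 δ κ u * ∫ σ, psid δ κ (σ + u) ∂ν := integral_const_mul _ _
    rw [this, h2]
    ring
  rw [lhs, swap, intervalIntegral.integral_of_le h12]
  apply MeasureTheory.setIntegral_congr_fun measurableSet_Ioc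
  intro σ hσ
  dsimp only
  unfold inn
  rw [intervalIntegral.integral_of_le hδ.le]

lemma NN_diff (hS : 0 < S) (hlam0 : 0 < lam0) (hδ : 0 < δ) (hκ0 : 0 < κ)
    (s₁ s₂ : ℝ) :
    NN S lam0 δ κ s₂ - NN S lam0 δ κ s₁ = ∫ σ in s₁..s₂, inn S lam0 δ κ σ := by
  rcases le_or_gt s₁ s₂ with h | h
  · exact NN_diff_le hS hlam0 hδ hκ0 h
  · rw [intervalIntegral.integral_symm, ← NN_diff_le hS hlam0 hδ hκ0 h.le]
    ring

lemma continuous_NN (hS : 0 < S) (hlam0 : 0 < lam0) (hδ : 0 < δ) (hκ0 : 0 < κ) :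
    Continuous (NN S lam0 δ κ) := by
  apply intervalIntegral.continuous_of_dominated_interval
    (bound := phi S lam0 δ κ)
  · intro s
    exact (meas_NNi s).aestronglyMeasurable
  · intro s
    filter_upwards [] with u _
    rw [Real.norm_eq_abs, abs_mul, abs_of_nonneg (phi_nonneg hS hlam0 hδ hκ0 u),
      abs_of_nonneg (psi_nonneg hδ _)]
    calc phi S lam0 δ κ u * psi δ κ (s + u) ≤ phi S lam0 δ κ u * 1 :=
          mul_le_mul_of_nonneg_left (psi_le_one hδ hκ0.le _) (phi_nonneg hS hlam0 hδ hκ0 u)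
      _ = phi S lam0 δ κ u := mul_one _
  · exact (integrable_phi hS hlam0 hδ hκ0).intervalIntegrable
  · filter_upwards [] with u _
    exact continuous_const.mul ((continuous_psi hδ hκ0).comp (continuous_id.add continuous_const))

lemma continuousAt_psid (hδ : 0 < δ) {z : ℝ} (h0 : z ≠ 0) (h1 : z ≠ δ) :
    ContinuousAt (psid δ κ) z := by
  rcases lt_trichotomy z 0 with hz | hz | hz
  · have : psid δ κ =ᶠ[nhds z] fun _ => 0 := by
      filter_upwards [Iio_mem_nhds hz] with y hy
      exact psid_of_nonpos hδ (le_of_lt hy)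
    exact continuousAt_const.congr this.symm
  · exact (h0 hz).elim
  · rcases lt_trichotomy z δ with hzd | hzd | hzd
    · have heq : psid δ κ =ᶠ[nhds z] fun y => (κ / δ) * (y / δ) ^ (κ - 1) := by
        filter_upwards [Ioo_mem_nhds hz hzd] with y hy
        exact psid_eq hy.1 hy.2.le
      have : ContinuousAt (fun y : ℝ => (κ / δ) * (y / δ) ^ (κ - 1)) z :=
        continuousAt_const.mul ((Real.continuousAt_rpow_const _ _ (Or.inl (by positivity))).comp
          ((continuous_id.div_const δ).continuousAt))
      exact this.congr heq.symm
    · exact absurd hzd h1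
    · have : psid δ κ =ᶠ[nhds z] fun _ => 0 := by
        filter_upwards [Ioi_mem_nhds hzd] with y hy
        exact psid_of_gt hy
      exact continuousAt_const.congr this.symm

lemma continuousAt_inn (hS : 0 < S) (hlam0 : 0 < lam0) (hδ : 0 < δ) (hκ0 : 0 < κ)
    (hκ1 : κ < 1) {σ₀ : ℝ} (h : 0 < σ₀) :
    ContinuousAt (inn S lam0 δ κ) σ₀ := by
  set C : ℝ := (κ / δ) * ((σ₀ / 2) / δ) ^ (κ - 1) with hC
  apply intervalIntegral.continuousAt_of_dominated_interval
    (bound := fun u => C * phi S lam0 δ κ u)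
  · filter_upwards [] with σ
    exact (meas_inni σ).aestronglyMeasurable
  · filter_upwards [Ioi_mem_nhds (half_lt_self h)] with σ hσ
    filter_upwards [] with u hu
    rw [Set.uIoc_of_le hδ.le] at hu
    rw [Real.norm_eq_abs, abs_mul, abs_of_nonneg (phi_nonneg hS hlam0 hδ hκ0 u),
      abs_of_nonneg (psid_nonneg hδ hκ0 _)]
    have hb : psid δ κ (σ + u) ≤ C :=
      psid_le hδ hκ0 hκ1 (half_pos h) (by have := hu.1; simp only [Set.mem_Ioi] at hσ; linarith)
    have h4 : 0 ≤ phi S lam0 δ κ u := phi_nonneg hS hlam0 hδ hκ0 u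
    calc phi S lam0 δ κ u * psid δ κ (σ + u) ≤ phi S lam0 δ κ u * C :=
          mul_le_mul_of_nonneg_left hb h4
      _ = C * phi S lam0 δ κ u := mul_comm _ _
  · exact ((integrable_phi hS hlam0 hδ hκ0).const_mul C).intervalIntegrable
  · have hz : volume ({-σ₀, δ - σ₀} : Set ℝ) = 0 :=
      Set.Finite.measure_zero ((Set.finite_singleton _).insert _) volume
    filter_upwards [MeasureTheory.compl_mem_ae_iff.2 hz] with u hu _
    simp only [Set.mem_compl_iff, Set.mem_insert_iff, Set.mem_singleton_iff, not_or] at hu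
    have h1 : ContinuousAt (psid δ κ) (σ₀ + u) := by
      apply continuousAt_psid hδ
      · intro hc; exact hu.1 (by linarith)
      · intro hc; exact hu.2 (by linarith)
    have h2 : ContinuousAt (fun σ : ℝ => σ + u) σ₀ := (continuous_add_right u).continuousAt
    have h3 : ContinuousAt (fun σ : ℝ => psid δ κ (σ + u)) σ₀ := by have := ContinuousAt.comp (x := σ₀) h1 h2; exact this
    exact continuousAt_const.mul h3

lemma hasDerivAt_NN (hS : 0 < S) (hlam0 : 0 < lam0) (hδ : 0 < δ) (hκ0 : 0 < κ)
    (hκ1 : κ < 1) {s₀ : ℝ} (h : 0 < s₀) :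
    HasDerivAt (NN S lam0 δ κ) (inn S lam0 δ κ s₀) s₀ := by
  have hconton : ContinuousOn (inn S lam0 δ κ) (Ioi 0) :=
    fun x hx => (continuousAt_inn hS hlam0 hδ hκ0 hκ1 hx).continuousWithinAt
  have hkey : NN S lam0 δ κ = fun s => NN S lam0 δ κ (s₀ / 2) + ∫ σ in (s₀/2)..s, inn S lam0 δ κ σ := by
    funext s
    have := NN_diff hS hlam0 hδ hκ0 (s₀ / 2) s
    linarith
  rw [hkey]
  apply HasDerivAt.const_add
  apply intervalIntegral.integral_hasDerivAt_right
  · apply ContinuousOn.intervalIntegrable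
    apply hconton.mono
    rw [Set.uIcc_of_le (by linarith : s₀ / 2 ≤ s₀)]
    exact fun x hx => lt_of_lt_of_le (half_pos h) hx.1
  · exact hconton.stronglyMeasurableAtFilter isOpen_Ioi _ h
  · exact continuousAt_inn hS hlam0 hδ hκ0 hκ1 h

lemma hasDerivAt_NN_zero (hS : 0 < S) (hlam0 : 0 < lam0) (hδ : 0 < δ) (hκ0 : 0 < κ)
    {s₀ : ℝ} (h : δ < s₀ ∨ s₀ < -δ) :
    HasDerivAt (NN S lam0 δ κ) 0 s₀ := by
  rcases h with h | h
  · have hloc : ∀ s ∈ Ioi δ, NN S lam0 δ κ s = ∫ u in (0:ℝ)..δ, phi S lam0 δ κ u := by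
      intro s hs
      unfold NN
      rw [intervalIntegral.integral_of_le hδ.le, intervalIntegral.integral_of_le hδ.le]
      apply MeasureTheory.setIntegral_congr_fun measurableSet_Ioc
      intro u hu
      dsimp only
      rw [psi_of_ge (by simp only [Set.mem_Ioi] at hs; have := hu.1; linarith), mul_one]
    have heq : NN S lam0 δ κ =ᶠ[nhds s₀] fun _ => ∫ u in (0:ℝ)..δ, phi S lam0 δ κ u := by
      filter_upwards [Ioi_mem_nhds h] with s hs
      exact hloc s hs
    exact (hasDerivAt_const s₀ _).congr_of_eventuallyEq heq
  · have hloc : ∀ s ∈ Iio (-δ), NN S lam0 δ κ s = 0 := by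
      intro s hs
      unfold NN
      rw [intervalIntegral.integral_of_le hδ.le,
        MeasureTheory.setIntegral_congr_fun measurableSet_Ioc
          (g := fun _ => (0:ℝ)) ?_]
      · simp
      · intro u hu
        dsimp only
        rw [psi_of_nonpos hδ (show s + u ≤ 0 by
          simp only [Set.mem_Iio] at hs; have := hu.2; linarith), mul_zero]
    have heq : NN S lam0 δ κ =ᶠ[nhds s₀] fun _ => (0:ℝ) := by
      filter_upwards [Iio_mem_nhds h] with s hs
      exact hloc s hs
    exact (hasDerivAt_const s₀ _).congr_of_eventuallyEq heq

lemma inn_eval (hS : 0 < S) (hlam0 : 0 < lam0) (hδ : 0 < δ) (hκ0 : 0 < κ) (hκ1 : κ < 1)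
    {s₀ : ℝ} (h0 : 0 < s₀) (h1 : s₀ ≤ δ) :
    inn S lam0 δ κ s₀ = (S * κ ^ 2 / δ) *
      ∫ x in (0:ℝ)..(1 - s₀ / δ),
        x ^ (κ - 1) * (x + s₀ / δ) ^ (κ - 1) / (S * x ^ κ + lam0) := by
  set C : ℝ := (κ / δ) * (s₀ / δ) ^ (κ - 1) with hCdef
  have hii : IntervalIntegrable (fun u => phi S lam0 δ κ u * psid δ κ (s₀ + u)) volume 0 δ := by
    rw [intervalIntegrable_iff_integrableOn_Ioc_of_le hδ.le]
    apply Integrable.mono' (((integrable_phi hS hlam0 hδ hκ0).const_mul C).restrict)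
      (meas_inni s₀).aestronglyMeasurable.restrict
    rw [MeasureTheory.ae_restrict_iff' measurableSet_Ioc]
    filter_upwards [] with u hu
    rw [Real.norm_eq_abs, abs_mul, abs_of_nonneg (phi_nonneg hS hlam0 hδ hκ0 u),
      abs_of_nonneg (psid_nonneg hδ hκ0 _)]
    have hb : psid δ κ (s₀ + u) ≤ C := psid_le hδ hκ0 hκ1 h0 (by have := hu.1; linarith)
    have h4 : 0 ≤ phi S lam0 δ κ u := phi_nonneg hS hlam0 hδ hκ0 u
    calc phi S lam0 δ κ u * psid δ κ (s₀ + u) ≤ phi S lam0 δ κ u * C :=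
          mul_le_mul_of_nonneg_left hb h4
      _ = C * phi S lam0 δ κ u := mul_comm _ _
  have hds : (0:ℝ) ≤ δ - s₀ := by linarith
  have hsub1 : Set.uIcc (0:ℝ) (δ - s₀) ⊆ Set.uIcc (0:ℝ) δ := by
    rw [Set.uIcc_of_le hds, Set.uIcc_of_le hδ.le]
    exact Set.Icc_subset_Icc le_rfl (by linarith)
  have hsub2 : Set.uIcc (δ - s₀) δ ⊆ Set.uIcc (0:ℝ) δ := by
    rw [Set.uIcc_of_le (by linarith : δ - s₀ ≤ δ), Set.uIcc_of_le hδ.le]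
    exact Set.Icc_subset_Icc (by linarith) le_rfl
  have hadd := intervalIntegral.integral_add_adjacent_intervals
    (a := (0:ℝ)) (b := δ - s₀) (c := δ)
    (f := fun u => phi S lam0 δ κ u * psid δ κ (s₀ + u))
    (hii.mono_set hsub1) (hii.mono_set hsub2)
  have hzero : ∫ u in (δ - s₀)..δ, phi S lam0 δ κ u * psid δ κ (s₀ + u) = 0 := by
    rw [intervalIntegral.integral_of_le (by linarith : δ - s₀ ≤ δ),
      MeasureTheory.setIntegral_congr_fun measurableSet_Ioc (g := fun _ => (0:ℝ)) ?_]
    · simp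
    · intro u hu
      dsimp only
      rw [psid_of_gt (by have := hu.1; linarith), mul_zero]
  have hsplit : inn S lam0 δ κ s₀
      = ∫ u in (0:ℝ)..(δ - s₀), phi S lam0 δ κ u * psid δ κ (s₀ + u) := by
    unfold inn
    rw [← hadd, hzero, add_zero]
  set y : ℝ := s₀ / δ with hy
  have hy0 : 0 < y := div_pos h0 hδ
  have hy1 : y ≤ 1 := by rw [hy, div_le_one hδ]; exact h1
  have hδy : δ * (1 - y) = δ - s₀ := by rw [hy]; field_simp
  have hcv := intervalIntegral.integral_comp_mul_left
    (fun u => phi S lam0 δ κ u * psid δ κ (s₀ + u)) (c := δ) hδ.ne'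
    (a := (0:ℝ)) (b := 1 - y)
  rw [mul_zero, hδy] at hcv
  have hmain : ∫ x in (0:ℝ)..(1 - y),
      phi S lam0 δ κ (δ * x) * psid δ κ (s₀ + δ * x)
      = ∫ x in (0:ℝ)..(1 - y),
        (S * κ ^ 2 / δ ^ 2) * (x ^ (κ - 1) * (x + y) ^ (κ - 1) / (S * x ^ κ + lam0)) := by
    rw [intervalIntegral.integral_of_le (by linarith : (0:ℝ) ≤ 1 - y),
      intervalIntegral.integral_of_le (by linarith : (0:ℝ) ≤ 1 - y)]
    apply MeasureTheory.setIntegral_congr_fun measurableSet_Ioc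
    intro x hx
    obtain ⟨hx0, hx1⟩ := hx
    dsimp only
    have hdx0 : 0 < δ * x := by positivity
    have hdxd : δ * x ≤ δ - s₀ := by
      calc δ * x ≤ δ * (1 - y) := by gcongr
        _ = δ - s₀ := hδy
    have e1 : δ * x / δ = x := by field_simp
    have e2 : (s₀ + δ * x) / δ = y + x := by
      rw [hy, add_div, mul_div_cancel_left₀ _ hδ.ne']
    rw [psid_eq (by linarith : (0:ℝ) < s₀ + δ * x) (by linarith : s₀ + δ * x ≤ δ), e2]
    unfold phi
    rw [psid_eq hdx0 (by linarith : δ * x ≤ δ), e1,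
      psi_eq_rpow hδ hκ0.ne' hdx0.le (by linarith : δ * x ≤ δ), e1]
    have e3 : y + x = x + y := add_comm _ _
    rw [e3]
    have hden : S * x ^ κ + lam0 ≠ 0 := by
      have : 0 ≤ x ^ κ := Real.rpow_nonneg hx0.le _
      positivity
    field_simp
  have hconst : ∫ x in (0:ℝ)..(1 - y),
      (S * κ ^ 2 / δ ^ 2) * (x ^ (κ - 1) * (x + y) ^ (κ - 1) / (S * x ^ κ + lam0))
      = (S * κ ^ 2 / δ ^ 2) * ∫ x in (0:ℝ)..(1 - y),
        x ^ (κ - 1) * (x + y) ^ (κ - 1) / (S * x ^ κ + lam0) :=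
    intervalIntegral.integral_const_mul _ _
  have hcv' : ∫ x in (0:ℝ)..(1 - y), phi S lam0 δ κ (δ * x) * psid δ κ (s₀ + δ * x)
      = δ⁻¹ • ∫ u in (0:ℝ)..(δ - s₀), phi S lam0 δ κ u * psid δ κ (s₀ + u) := hcv
  have hBA : (∫ u in (0:ℝ)..(δ - s₀), phi S lam0 δ κ u * psid δ κ (s₀ + u))
      = δ * ∫ x in (0:ℝ)..(1 - y), phi S lam0 δ κ (δ * x) * psid δ κ (s₀ + δ * x) := by
    rw [hcv', smul_eq_mul]
    field_simp
  rw [hsplit, hBA, hmain, hconst]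
  field_simp

noncomputable def FF (S h lam0 δ κ ϑ₀ : ℝ) (x t : ℝ) : ℝ :=
  (lamT S lam0 δ κ x t / lamR S h lam0 δ κ ϑ₀ t - 1 -
      Real.log (lamT S lam0 δ κ x t / lamR S h lam0 δ κ ϑ₀ t)) * lamR S h lam0 δ κ ϑ₀ t

noncomputable def gg (S h lam0 δ κ ϑ₀ : ℝ) (σ t : ℝ) : ℝ :=
  S * psid δ κ (t - σ) * (lamR S h lam0 δ κ ϑ₀ t / lamT S lam0 δ κ σ t - 1)

noncomputable def Jd (S h lam0 δ κ ϑ₀ : ℝ) (σ : ℝ) : ℝ :=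
  lam0 * (Real.log (S + lam0) - Real.log lam0) - S + (S + h) * NN S lam0 δ κ (σ - ϑ₀)

section Aux3

variable {S h lam0 δ κ ϑ₀ τ : ℝ}

lemma lamT_ge (hS : 0 < S) (hδ : 0 < δ) (x t : ℝ) : lam0 ≤ lamT S lam0 δ κ x t :=
  le_add_of_nonneg_left (mul_nonneg hS.le (psi_nonneg hδ _))

lemma lamT_pos (hS : 0 < S) (hlam0 : 0 < lam0) (hδ : 0 < δ) (x t : ℝ) :
    0 < lamT S lam0 δ κ x t := lt_of_lt_of_le hlam0 (lamT_ge hS hδ x t)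

lemma lamR_ge (hSh : 0 < S + h) (hδ : 0 < δ) (t : ℝ) : lam0 ≤ lamR S h lam0 δ κ ϑ₀ t :=
  le_add_of_nonneg_left (mul_nonneg hSh.le (psi_nonneg hδ _))

lemma lamR_pos (hSh : 0 < S + h) (hlam0 : 0 < lam0) (hδ : 0 < δ) (t : ℝ) :
    0 < lamR S h lam0 δ κ ϑ₀ t := lt_of_lt_of_le hlam0 (lamR_ge hSh hδ t)

lemma lamR_le (hSh : 0 < S + h) (hδ : 0 < δ) (hκ0 : 0 < κ) (t : ℝ) :
    lamR S h lam0 δ κ ϑ₀ t ≤ S + h + lam0 := by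
  unfold lamR
  have := psi_le_one hδ hκ0.le (t - ϑ₀) (κ := κ)
  nlinarith [psi_le_one hδ hκ0.le (t - ϑ₀) (κ := κ)]

lemma measurable_lamR : Measurable (lamR S h lam0 δ κ ϑ₀) :=
  ((measurable_psi.comp (measurable_id.sub_const ϑ₀)).const_mul _).add_const lam0

lemma continuous_lamR (hδ : 0 < δ) (hκ0 : 0 < κ) : Continuous (lamR S h lam0 δ κ ϑ₀) :=
  (continuous_const.mul
    ((continuous_psi hδ hκ0).comp (continuous_id.sub continuous_const))).add continuous_const

lemma continuous_lamT_t (hδ : 0 < δ) (hκ0 : 0 < κ) (x : ℝ) :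
    Continuous (fun t => lamT S lam0 δ κ x t) :=
  (continuous_const.mul
    ((continuous_psi hδ hκ0).comp (continuous_id.sub continuous_const))).add continuous_const

lemma continuous_lamT_x (hδ : 0 < δ) (hκ0 : 0 < κ) (t : ℝ) :
    Continuous (fun x => lamT S lam0 δ κ x t) :=
  (continuous_const.mul
    ((continuous_psi hδ hκ0).comp (continuous_const.sub continuous_id))).add continuous_const

lemma FF_eq (hS : 0 < S) (hlam0 : 0 < lam0) (hδ : 0 < δ) (hκ0 : 0 < κ) (hSh : 0 < S + h)
    (x t : ℝ) :
    FF S h lam0 δ κ ϑ₀ x t = lamT S lam0 δ κ x t - lamR S h lam0 δ κ ϑ₀ t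
      - lamR S h lam0 δ κ ϑ₀ t * Real.log (lamT S lam0 δ κ x t)
      + lamR S h lam0 δ κ ϑ₀ t * Real.log (lamR S h lam0 δ κ ϑ₀ t) := by
  unfold FF
  have hT := lamT_pos (κ := κ) hS hlam0 hδ x t
  have hR := lamR_pos (κ := κ) (ϑ₀ := ϑ₀) hSh hlam0 hδ t
  rw [Real.log_div hT.ne' hR.ne']
  field_simp
  ring

lemma continuous_FF_t (hS : 0 < S) (hlam0 : 0 < lam0) (hδ : 0 < δ) (hκ0 : 0 < κ)
    (hSh : 0 < S + h) (x : ℝ) :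
    Continuous (fun t => FF S h lam0 δ κ ϑ₀ x t) := by
  unfold FF
  have hR : ∀ t, lamR S h lam0 δ κ ϑ₀ t ≠ 0 := fun t => (lamR_pos hSh hlam0 hδ t).ne'
  have h1 : Continuous (fun t => lamT S lam0 δ κ x t / lamR S h lam0 δ κ ϑ₀ t) :=
    (continuous_lamT_t hδ hκ0 x).div (continuous_lamR hδ hκ0) hR
  have h2 : ∀ t, lamT S lam0 δ κ x t / lamR S h lam0 δ κ ϑ₀ t ≠ 0 :=
    fun t => (div_pos (lamT_pos hS hlam0 hδ x t) (lamR_pos hSh hlam0 hδ t)).ne'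
  exact (((h1.sub continuous_const).sub (h1.log h2)).mul (continuous_lamR hδ hκ0))

lemma continuous_FF_x (hS : 0 < S) (hlam0 : 0 < lam0) (hδ : 0 < δ) (hκ0 : 0 < κ)
    (hSh : 0 < S + h) (t : ℝ) :
    Continuous (fun x => FF S h lam0 δ κ ϑ₀ x t) := by
  unfold FF
  have h1 : Continuous (fun x => lamT S lam0 δ κ x t / lamR S h lam0 δ κ ϑ₀ t) :=
    (continuous_lamT_x hδ hκ0 t).div_const _
  have h2 : ∀ x, lamT S lam0 δ κ x t / lamR S h lam0 δ κ ϑ₀ t ≠ 0 :=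
    fun x => (div_pos (lamT_pos hS hlam0 hδ x t) (lamR_pos hSh hlam0 hδ t)).ne'
  exact (((h1.sub continuous_const).sub (h1.log h2)).mul continuous_const)

lemma hasDerivWithinAt_FF (hS : 0 < S) (hlam0 : 0 < lam0) (hδ : 0 < δ) (hκ0 : 0 < κ)
    (hSh : 0 < S + h) (t σ : ℝ) :
    HasDerivWithinAt (fun z => FF S h lam0 δ κ ϑ₀ z t)
      (gg S h lam0 δ κ ϑ₀ σ t) (Ioi σ) σ := by
  set b := lamR S h lam0 δ κ ϑ₀ t with hbdef
  have hb : 0 < b := lamR_pos hSh hlam0 hδ t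
  rcases le_or_gt (t - σ) 0 with hc | hc
  · have hgg : gg S h lam0 δ κ ϑ₀ σ t = 0 := by
      unfold gg; rw [psid_of_nonpos hδ hc]; ring
    rw [hgg]
    apply (hasDerivWithinAt_const σ (Ioi σ) (FF S h lam0 δ κ ϑ₀ σ t)).congr
    · intro z hz
      have hz' : t - z ≤ 0 := by simp only [Set.mem_Ioi] at hz; linarith
      unfold FF lamT
      rw [psi_of_nonpos hδ hz', psi_of_nonpos hδ hc]
    · rfl
  rcases le_or_gt (t - σ) δ with hcd | hcd
  · -- main case 0 < t - σ ≤ δ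
    set B : ℝ → ℝ := fun z => S * ((t - z) / δ) ^ κ + lam0 with hBdef
    set fB : ℝ → ℝ := fun z => B z - b - b * Real.log (B z) + b * Real.log b with hfBdef
    have hbase : 0 < (t - σ) / δ := by positivity
    have hBσpos : 0 < B σ := by
      have : 0 ≤ ((t - σ) / δ) ^ κ := Real.rpow_nonneg hbase.le _
      have : 0 ≤ S * ((t - σ) / δ) ^ κ := mul_nonneg hS.le this
      simp only [hBdef]
      linarith
    have hinner : HasDerivAt (fun z : ℝ => (t - z) / δ) (-1 / δ) σ := by
      have : HasDerivAt (fun z : ℝ => t - z) (-1) σ := (hasDerivAt_id σ).const_sub t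
      exact this.div_const δ
    have hrpow : HasDerivAt (fun z : ℝ => ((t - z) / δ) ^ κ)
        (κ * ((t - σ) / δ) ^ (κ - 1) * (-1 / δ)) σ :=
      by have := (Real.hasDerivAt_rpow_const (p := κ) (Or.inl hbase.ne')).comp σ hinner; exact this
    have hdB : HasDerivAt B (-(S * psid δ κ (t - σ))) σ := by
      have := (hrpow.const_mul S).add_const lam0
      exact this.congr_deriv (by rw [psid_eq hc hcd]; ring)
    have hdlog : HasDerivAt (fun z => Real.log (B z)) ((B σ)⁻¹ * (-(S * psid δ κ (t - σ)))) σ :=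
      (Real.hasDerivAt_log hBσpos.ne').comp σ hdB
    have hdfB : HasDerivAt fB
        (-(S * psid δ κ (t - σ)) - b * ((B σ)⁻¹ * (-(S * psid δ κ (t - σ))))) σ :=
      ((hdB.sub_const b).sub (hdlog.const_mul b)).add_const (b * Real.log b)
    have hBT : B σ = lamT S lam0 δ κ σ t := by
      unfold lamT
      rw [psi_eq_rpow hδ hκ0.ne' hc.le hcd]
    have hval : gg S h lam0 δ κ ϑ₀ σ t
        = -(S * psid δ κ (t - σ)) - b * ((B σ)⁻¹ * (-(S * psid δ κ (t - σ)))) := by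
      unfold gg
      rw [← hbdef, ← hBT]
      field_simp
      ring
    rw [hval]
    have heq : ∀ z ∈ Ioi σ ∩ Iio t, FF S h lam0 δ κ ϑ₀ z t = fB z := by
      intro z hz
      obtain ⟨hz1, hz2⟩ := hz
      simp only [Set.mem_Ioi] at hz1
      simp only [Set.mem_Iio] at hz2
      have h1 : 0 ≤ t - z := by linarith
      have h2 : t - z ≤ δ := by linarith
      rw [FF_eq hS hlam0 hδ hκ0 hSh]
      simp only [hfBdef, hBdef]
      unfold lamT
      rw [psi_eq_rpow hδ hκ0.ne' h1 h2]
    have hmem : Ioi σ ∩ Iio t ∈ nhdsWithin σ (Ioi σ) :=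
      inter_mem_nhdsWithin _ (Iio_mem_nhds (by linarith))
    apply (hdfB.hasDerivWithinAt).congr_of_eventuallyEq
    · filter_upwards [hmem] with z hz
      exact heq z hz
    · rw [FF_eq hS hlam0 hδ hκ0 hSh]
      simp only [hfBdef, hBdef]
      unfold lamT
      rw [psi_eq_rpow hδ hκ0.ne' hc.le hcd]
  · -- case t - σ > δ
    have hgg : gg S h lam0 δ κ ϑ₀ σ t = 0 := by
      unfold gg; rw [psid_of_gt hcd]; ring
    rw [hgg]
    have heq : (fun z => FF S h lam0 δ κ ϑ₀ z t) =ᶠ[nhds σ] fun _ => FF S h lam0 δ κ ϑ₀ σ t := by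
      filter_upwards [Iio_mem_nhds (show σ < t - δ by linarith)] with z hz
      simp only [Set.mem_Iio] at hz
      unfold FF lamT
      rw [psi_of_ge (by linarith : δ ≤ t - z), psi_of_ge (by linarith : δ ≤ t - σ)]
    exact ((hasDerivAt_const σ _).congr_of_eventuallyEq heq).hasDerivWithinAt

lemma measurable_gg_sigma (t : ℝ) : Measurable (fun σ => gg S h lam0 δ κ ϑ₀ σ t) := by
  unfold gg
  apply Measurable.mul
  · exact (measurable_psid.comp (measurable_const.sub measurable_id)).const_mul S
  · apply Measurable.sub _ measurable_const
    apply Measurable.div measurable_const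
    exact ((measurable_psi.comp (measurable_const.sub measurable_id)).const_mul S).add_const lam0

lemma gg_bound (hS : 0 < S) (hlam0 : 0 < lam0) (hδ : 0 < δ) (hκ0 : 0 < κ)
    (hSh : 0 < S + h) (σ t : ℝ) :
    ‖gg S h lam0 δ κ ϑ₀ σ t‖ ≤ (S * ((S + h + lam0) / lam0 + 1)) * psid δ κ (t - σ) := by
  unfold gg
  have hT := lamT_pos (κ := κ) hS hlam0 hδ σ t
  have hTge := lamT_ge hS hδ σ t (lam0 := lam0) (κ := κ)
  have hR := lamR_pos (κ := κ) (ϑ₀ := ϑ₀) hSh hlam0 hδ t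
  have hRle := lamR_le hSh hδ hκ0 t (ϑ₀ := ϑ₀) (lam0 := lam0)
  have hpsid := psid_nonneg hδ hκ0 (t - σ)
  rw [Real.norm_eq_abs, abs_mul]
  have h1 : |S * psid δ κ (t - σ)| = S * psid δ κ (t - σ) := abs_of_nonneg (by positivity)
  rw [h1]
  have h2 : |lamR S h lam0 δ κ ϑ₀ t / lamT S lam0 δ κ σ t - 1| ≤ (S + h + lam0) / lam0 + 1 := by
    have hd : 0 < lamR S h lam0 δ κ ϑ₀ t / lamT S lam0 δ κ σ t := div_pos hR hT
    have hd2 : lamR S h lam0 δ κ ϑ₀ t / lamT S lam0 δ κ σ t ≤ (S + h + lam0) / lam0 :=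
      div_le_div₀ (by linarith) hRle hlam0 hTge
    rw [abs_sub_comm]
    calc |1 - lamR S h lam0 δ κ ϑ₀ t / lamT S lam0 δ κ σ t| ≤ 1 + |lamR S h lam0 δ κ ϑ₀ t / lamT S lam0 δ κ σ t| := by
          exact (abs_sub _ _).trans (by rw [abs_one])
      _ = 1 + lamR S h lam0 δ κ ϑ₀ t / lamT S lam0 δ κ σ t := by rw [abs_of_pos hd]
      _ ≤ 1 + (S + h + lam0) / lam0 := by linarith
      _ = (S + h + lam0) / lam0 + 1 := by ring
  calc S * psid δ κ (t - σ) * |lamR S h lam0 δ κ ϑ₀ t / lamT S lam0 δ κ σ t - 1|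
      ≤ S * psid δ κ (t - σ) * ((S + h + lam0) / lam0 + 1) := by
        apply mul_le_mul_of_nonneg_left h2 (by positivity)
    _ = (S * ((S + h + lam0) / lam0 + 1)) * psid δ κ (t - σ) := by ring

lemma FF_sub (hS : 0 < S) (hlam0 : 0 < lam0) (hδ : 0 < δ) (hκ0 : 0 < κ)
    (hSh : 0 < S + h) (t : ℝ) {z₁ z₂ : ℝ} (h12 : z₁ ≤ z₂) :
    FF S h lam0 δ κ ϑ₀ z₂ t - FF S h lam0 δ κ ϑ₀ z₁ t
      = ∫ σ in z₁..z₂, gg S h lam0 δ κ ϑ₀ σ t := by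
  have hint : IntervalIntegrable (fun σ => gg S h lam0 δ κ ϑ₀ σ t) volume z₁ z₂ := by
    apply Integrable.intervalIntegrable
    apply Integrable.mono'
      (((integrable_psid hδ hκ0).comp_sub_left t).const_mul (S * ((S + h + lam0) / lam0 + 1)))
      (measurable_gg_sigma t).aestronglyMeasurable
    filter_upwards [] with σ
    exact gg_bound hS hlam0 hδ hκ0 hSh σ t
  exact (intervalIntegral.integral_eq_sub_of_hasDeriv_right_of_le h12
    (continuous_FF_x hS hlam0 hδ hκ0 hSh t).continuousOn
    (fun σ _ => hasDerivWithinAt_FF hS hlam0 hδ hκ0 hSh t σ) hint).symm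

lemma gg_eq_alt (hS : 0 < S) (hlam0 : 0 < lam0) (hδ : 0 < δ) (σ t : ℝ) :
    gg S h lam0 δ κ ϑ₀ σ t
      = phi S lam0 δ κ (t - σ) * lamR S h lam0 δ κ ϑ₀ t - S * psid δ κ (t - σ) := by
  unfold gg phi lamT
  have hT : 0 < S * psi δ κ (t - σ) + lam0 := denom_pos hS hlam0 hδ _
  field_simp

lemma integrable_w (hS : 0 < S) (hlam0 : 0 < lam0) (hδ : 0 < δ) (hκ0 : 0 < κ)
    (hSh : 0 < S + h) (σ : ℝ) :
    Integrable (fun u => phi S lam0 δ κ u * lamR S h lam0 δ κ ϑ₀ (u + σ)) := by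
  have hm : Measurable (fun u => phi S lam0 δ κ u * lamR S h lam0 δ κ ϑ₀ (u + σ)) :=
    measurable_phi.mul (measurable_lamR.comp (measurable_id.add_const σ))
  apply Integrable.mono' ((integrable_phi hS hlam0 hδ hκ0).const_mul (S + h + lam0))
    hm.aestronglyMeasurable
  filter_upwards [] with u
  rw [Real.norm_eq_abs, abs_mul, abs_of_nonneg (phi_nonneg hS hlam0 hδ hκ0 u),
    abs_of_nonneg (lamR_pos (κ := κ) (ϑ₀ := ϑ₀) hSh hlam0 hδ _).le]
  calc phi S lam0 δ κ u * lamR S h lam0 δ κ ϑ₀ (u + σ)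
      ≤ phi S lam0 δ κ u * (S + h + lam0) :=
        mul_le_mul_of_nonneg_left (lamR_le hSh hδ hκ0 _) (phi_nonneg hS hlam0 hδ hκ0 u)
    _ = (S + h + lam0) * phi S lam0 δ κ u := mul_comm _ _

lemma t_integral (hS : 0 < S) (hlam0 : 0 < lam0) (hδ : 0 < δ) (hκ0 : 0 < κ)
    (hSh : 0 < S + h) {σ : ℝ} (hσ0 : 0 < σ) (hστ : σ + δ < τ) :
    ∫ t in (0:ℝ)..τ, gg S h lam0 δ κ ϑ₀ σ t = Jd S h lam0 δ κ ϑ₀ σ := by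
  set w : ℝ → ℝ := fun u => phi S lam0 δ κ u * lamR S h lam0 δ κ ϑ₀ (u + σ) with hwdef
  have hw : Integrable w := integrable_w hS hlam0 hδ hκ0 hSh σ
  have hint_psid : Integrable (fun t => psid δ κ (t - σ)) :=
    (integrable_psid hδ hκ0).comp_sub_right σ
  have hint_philam : Integrable (fun t => phi S lam0 δ κ (t - σ) * lamR S h lam0 δ κ ϑ₀ t) := by
    apply (hw.comp_sub_right σ).congr
    filter_upwards [] with t
    simp only [hwdef, sub_add_cancel]
  have hsplit : ∫ t in (0:ℝ)..τ, gg S h lam0 δ κ ϑ₀ σ t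
      = (∫ t in (0:ℝ)..τ, phi S lam0 δ κ (t - σ) * lamR S h lam0 δ κ ϑ₀ t)
        - ∫ t in (0:ℝ)..τ, S * psid δ κ (t - σ) := by
    rw [← intervalIntegral.integral_sub hint_philam.intervalIntegrable
      ((hint_psid.const_mul S).intervalIntegrable)]
    apply intervalIntegral.integral_congr
    intro t _
    exact gg_eq_alt hS hlam0 hδ σ t
  have hI1 : ∫ t in (0:ℝ)..τ, S * psid δ κ (t - σ) = S := by
    rw [intervalIntegral.integral_const_mul, intervalIntegral.integral_comp_sub_right (psid δ κ) σ,
      psid_integral hδ hκ0, psi_of_ge (by linarith : δ ≤ τ - σ),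
      psi_of_nonpos hδ (by linarith : (0:ℝ) - σ ≤ 0)]
    ring
  have hw_ii : ∀ a b : ℝ, IntervalIntegrable w volume a b := fun a b => hw.intervalIntegrable
  have hz1 : ∫ u in (0 - σ)..(0:ℝ), w u = 0 := by
    rw [intervalIntegral.integral_of_le (by linarith : 0 - σ ≤ (0:ℝ)),
      MeasureTheory.setIntegral_congr_fun measurableSet_Ioc (g := fun _ => (0:ℝ)) ?_]
    · simp
    · intro u hu
      simp only [hwdef]
      rw [phi_of_nonpos hδ hu.2, zero_mul]
  have hz2 : ∫ u in δ..(τ - σ), w u = 0 := by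
    rw [intervalIntegral.integral_of_le (by linarith : δ ≤ τ - σ),
      MeasureTheory.setIntegral_congr_fun measurableSet_Ioc (g := fun _ => (0:ℝ)) ?_]
    · simp
    · intro u hu
      simp only [hwdef]
      rw [phi_of_gt hu.1, zero_mul]
  have hmid : ∫ u in (0:ℝ)..δ, w u
      = (S + h) * NN S lam0 δ κ (σ - ϑ₀) + lam0 * (Real.log (S + lam0) - Real.log lam0) := by
    have e2 : ∀ u : ℝ, w u
        = (S + h) * (phi S lam0 δ κ u * psi δ κ ((σ - ϑ₀) + u)) + lam0 * phi S lam0 δ κ u := by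
      intro u
      simp only [hwdef]
      unfold lamR
      rw [show u + σ - ϑ₀ = σ - ϑ₀ + u by ring]
      ring
    rw [intervalIntegral.integral_congr (fun u _ => e2 u),
      intervalIntegral.integral_add
        (((integrable_NN_integrand hS hlam0 hδ hκ0 (σ - ϑ₀)).const_mul (S + h)).intervalIntegrable)
        (((integrable_phi hS hlam0 hδ hκ0).const_mul lam0).intervalIntegrable),
      intervalIntegral.integral_const_mul, intervalIntegral.integral_const_mul,
      integral_phi hS hlam0 hδ hκ0]
    rfl
  have hI2 : ∫ t in (0:ℝ)..τ, phi S lam0 δ κ (t - σ) * lamR S h lam0 δ κ ϑ₀ t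
      = (S + h) * NN S lam0 δ κ (σ - ϑ₀) + lam0 * (Real.log (S + lam0) - Real.log lam0) := by
    have e1 : ∫ t in (0:ℝ)..τ, phi S lam0 δ κ (t - σ) * lamR S h lam0 δ κ ϑ₀ t
        = ∫ t in (0:ℝ)..τ, w (t - σ) := by
      apply intervalIntegral.integral_congr
      intro t _
      simp only [hwdef, sub_add_cancel]
    rw [e1, intervalIntegral.integral_comp_sub_right w σ]
    have hadd1 := intervalIntegral.integral_add_adjacent_intervals
      (hw_ii (0 - σ) 0) (hw_ii 0 (τ - σ))
    have hadd2 := intervalIntegral.integral_add_adjacent_intervals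
      (hw_ii 0 δ) (hw_ii δ (τ - σ))
    rw [← hadd1, ← hadd2, hz1, hz2, hmid]
    ring
  rw [hsplit, hI1, hI2]
  unfold Jd
  ring

noncomputable def AA (S h lam0 δ κ ϑ₀ τ : ℝ) (x : ℝ) : ℝ :=
  ∫ t in (0:ℝ)..τ, FF S h lam0 δ κ ϑ₀ x t

lemma JKL_eq (hS : 0 < S) (hlam0 : 0 < lam0) (hδ : 0 < δ) (hκ0 : 0 < κ) (hSh : 0 < S + h)
    (hϑ₀0 : 0 < ϑ₀) (hϑ₀τ : ϑ₀ < τ) {x : ℝ} (hx0 : 0 < x) (hxτ : x < τ) :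
    JKL S h lam0 δ κ τ ϑ₀ x = AA S h lam0 δ κ ϑ₀ τ x := by
  have hii : ∀ a b : ℝ, IntervalIntegrable (fun t => FF S h lam0 δ κ ϑ₀ x t) volume a b :=
    fun a b => (continuous_FF_t hS hlam0 hδ hκ0 hSh x).intervalIntegrable a b
  have hm0 : 0 < min x ϑ₀ := lt_min hx0 hϑ₀0
  have hJKL : JKL S h lam0 δ κ τ ϑ₀ x
      = ∫ t in (min x ϑ₀)..τ, FF S h lam0 δ κ ϑ₀ x t := rfl
  rw [hJKL]
  unfold AA
  rw [← intervalIntegral.integral_add_adjacent_intervals (hii 0 (min x ϑ₀)) (hii (min x ϑ₀) τ)]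
  have hzero : ∫ t in (0:ℝ)..(min x ϑ₀), FF S h lam0 δ κ ϑ₀ x t = 0 := by
    rw [intervalIntegral.integral_of_le hm0.le,
      MeasureTheory.setIntegral_congr_fun measurableSet_Ioc (g := fun _ => (0:ℝ)) ?_]
    · simp
    · intro t ht
      dsimp only
      have h1 : t - x ≤ 0 := by have := ht.2; have := min_le_left x ϑ₀; linarith
      have h2 : t - ϑ₀ ≤ 0 := by have := ht.2; have := min_le_right x ϑ₀; linarith
      unfold FF lamT lamR
      rw [psi_of_nonpos hδ h1, psi_of_nonpos hδ h2]
      simp only [mul_zero, zero_add]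
      rw [div_self hlam0.ne', Real.log_one]
      ring
  rw [hzero, zero_add]

lemma measurable_gg_pair : Measurable
    (Function.uncurry fun (t σ : ℝ) => gg S h lam0 δ κ ϑ₀ σ t) := by
  unfold gg
  apply Measurable.mul
  · exact (measurable_psid.comp (measurable_fst.sub measurable_snd)).const_mul S
  · apply Measurable.sub _ measurable_const
    apply Measurable.div (measurable_lamR.comp measurable_fst)
    exact ((measurable_psi.comp (measurable_fst.sub measurable_snd)).const_mul S).add_const lam0

lemma A_diff_le (hS : 0 < S) (hlam0 : 0 < lam0) (hδ : 0 < δ) (hκ0 : 0 < κ) (hSh : 0 < S + h)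
    {z₁ z₂ : ℝ} (hz₁ : z₁ ∈ Ioo 0 (τ - δ)) (hz₂ : z₂ ∈ Ioo 0 (τ - δ)) (h12 : z₁ ≤ z₂) :
    AA S h lam0 δ κ ϑ₀ τ z₂ - AA S h lam0 δ κ ϑ₀ τ z₁ = ∫ σ in z₁..z₂, Jd S h lam0 δ κ ϑ₀ σ := by
  set Cst : ℝ := S * ((S + h + lam0) / lam0 + 1) with hCst
  have hτδ : (0:ℝ) < τ - δ := lt_trans hz₁.1 hz₁.2
  have hτ0 : (0:ℝ) ≤ τ := by linarith
  set μ : Measure ℝ := volume.restrict (Ioc 0 τ) with hμ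
  set ν : Measure ℝ := volume.restrict (Ioc z₁ z₂) with hν
  haveI : IsFiniteMeasure μ := by
    constructor
    rw [hμ, Measure.restrict_apply_univ]
    exact measure_Ioc_lt_top
  have hgg_int_sigma : ∀ t : ℝ, Integrable (fun σ => gg S h lam0 δ κ ϑ₀ σ t) := by
    intro t
    apply Integrable.mono'
      (((integrable_psid hδ hκ0).comp_sub_left t).const_mul Cst)
      (measurable_gg_sigma t).aestronglyMeasurable
    filter_upwards [] with σ
    exact gg_bound hS hlam0 hδ hκ0 hSh σ t
  have hpsid_int_sigma : ∀ t : ℝ, Integrable (fun σ => Cst * psid δ κ (t - σ)) :=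
    fun t => ((integrable_psid hδ hκ0).comp_sub_left t).const_mul Cst
  have hCst0 : 0 ≤ Cst := by
    have h1 : 0 < (S + h + lam0) / lam0 := by positivity
    positivity
  have hintg : Integrable (Function.uncurry fun (t σ : ℝ) => gg S h lam0 δ κ ϑ₀ σ t)
      (μ.prod ν) := by
    rw [MeasureTheory.integrable_prod_iff measurable_gg_pair.aestronglyMeasurable]
    constructor
    · filter_upwards [] with t
      exact (hgg_int_sigma t).restrict
    · apply Integrable.mono' (integrable_const Cst)
        ((measurable_gg_pair.aestronglyMeasurable.norm.integral_prod_right'))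
      filter_upwards [] with t
      simp only [Function.uncurry_apply_pair]
      have hnn : 0 ≤ ∫ σ, ‖gg S h lam0 δ κ ϑ₀ σ t‖ ∂ν :=
        integral_nonneg (fun σ => norm_nonneg _)
      rw [Real.norm_eq_abs, abs_of_nonneg hnn]
      have hle : ∫ σ, ‖gg S h lam0 δ κ ϑ₀ σ t‖ ∂ν ≤ ∫ σ, Cst * psid δ κ (t - σ) ∂ν := by
        apply integral_mono ((hgg_int_sigma t).norm.restrict) ((hpsid_int_sigma t).restrict)
        intro σ
        exact gg_bound hS hlam0 hδ hκ0 hSh σ t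
      have heval : ∫ σ, Cst * psid δ κ (t - σ) ∂ν
          = Cst * (psi δ κ (t - z₁) - psi δ κ (t - z₂)) := by
        show ∫ σ in Ioc z₁ z₂, Cst * psid δ κ (t - σ) = _
        rw [← intervalIntegral.integral_of_le h12, intervalIntegral.integral_const_mul,
          intervalIntegral.integral_comp_sub_left (psid δ κ) t, psid_integral hδ hκ0]
      have hle2 : Cst * (psi δ κ (t - z₁) - psi δ κ (t - z₂)) ≤ Cst * 1 := by
        apply mul_le_mul_of_nonneg_left _ hCst0
        have := psi_le_one hδ hκ0.le (t - z₁) (κ := κ)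
        have := psi_nonneg hδ (t - z₂) (κ := κ)
        linarith
      rw [heval] at hle
      calc ∫ σ, ‖gg S h lam0 δ κ ϑ₀ σ t‖ ∂ν ≤ Cst * 1 := le_trans hle hle2
        _ = Cst := mul_one _
  have swap := MeasureTheory.integral_integral_swap hintg
  have step1 : AA S h lam0 δ κ ϑ₀ τ z₂ - AA S h lam0 δ κ ϑ₀ τ z₁
      = ∫ t in (0:ℝ)..τ, (FF S h lam0 δ κ ϑ₀ z₂ t - FF S h lam0 δ κ ϑ₀ z₁ t) := by
    unfold AA
    rw [intervalIntegral.integral_sub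
      ((continuous_FF_t hS hlam0 hδ hκ0 hSh z₂).intervalIntegrable 0 τ)
      ((continuous_FF_t hS hlam0 hδ hκ0 hSh z₁).intervalIntegrable 0 τ)]
  rw [step1]
  have step2 : ∫ t in (0:ℝ)..τ, (FF S h lam0 δ κ ϑ₀ z₂ t - FF S h lam0 δ κ ϑ₀ z₁ t)
      = ∫ t, (∫ σ, gg S h lam0 δ κ ϑ₀ σ t ∂ν) ∂μ := by
    rw [intervalIntegral.integral_of_le hτ0]
    apply MeasureTheory.setIntegral_congr_fun measurableSet_Ioc
    intro t _
    dsimp only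
    rw [FF_sub hS hlam0 hδ hκ0 hSh t h12, intervalIntegral.integral_of_le h12]
  rw [step2, swap]
  have step3 : ∫ σ, (∫ t, gg S h lam0 δ κ ϑ₀ σ t ∂μ) ∂ν = ∫ σ, Jd S h lam0 δ κ ϑ₀ σ ∂ν := by
    apply MeasureTheory.setIntegral_congr_fun measurableSet_Ioc
    intro σ hσ
    dsimp only
    have h1 : 0 < σ := lt_of_le_of_lt hz₁.1.le (lt_of_le_of_lt le_rfl hσ.1)
    have h2 : σ + δ < τ := by
      have := hσ.2
      have := hz₂.2
      linarith
    rw [show (∫ t, gg S h lam0 δ κ ϑ₀ σ t ∂μ) = ∫ t in (0:ℝ)..τ, gg S h lam0 δ κ ϑ₀ σ t from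
      (intervalIntegral.integral_of_le hτ0).symm]
    exact t_integral hS hlam0 hδ hκ0 hSh h1 h2
  rw [step3, ← intervalIntegral.integral_of_le h12]

lemma continuous_Jd (hS : 0 < S) (hlam0 : 0 < lam0) (hδ : 0 < δ) (hκ0 : 0 < κ) :
    Continuous (Jd S h lam0 δ κ ϑ₀) := by
  have h1 : Continuous fun σ : ℝ => NN S lam0 δ κ (σ - ϑ₀) :=
    (continuous_NN hS hlam0 hδ hκ0).comp (continuous_id.sub continuous_const)
  unfold Jd
  exact continuous_const.add (continuous_const.mul h1)

lemma hasDerivAt_JKL (hS : 0 < S) (hlam0 : 0 < lam0) (hδ : 0 < δ) (hκ0 : 0 < κ)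
    (hSh : 0 < S + h) (hϑ₀ : ϑ₀ ∈ Ioo 0 (τ - δ)) {x : ℝ} (hx : x ∈ Ioo 0 (τ - δ)) :
    HasDerivAt (JKL S h lam0 δ κ τ ϑ₀) (Jd S h lam0 δ κ ϑ₀ x) x := by
  have hτδ : (0:ℝ) < τ - δ := lt_trans hϑ₀.1 hϑ₀.2
  have hJd_cont := continuous_Jd hS hlam0 hδ hκ0 (ϑ₀ := ϑ₀) (h := h)
  have hQ : HasDerivAt (fun z => AA S h lam0 δ κ ϑ₀ τ ϑ₀ + ∫ σ in ϑ₀..z, Jd S h lam0 δ κ ϑ₀ σ)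
      (Jd S h lam0 δ κ ϑ₀ x) x := by
    apply HasDerivAt.const_add
    exact intervalIntegral.integral_hasDerivAt_right (hJd_cont.intervalIntegrable ϑ₀ x)
      ⟨Set.univ, Filter.univ_mem, hJd_cont.aestronglyMeasurable⟩ hJd_cont.continuousAt
  apply hQ.congr_of_eventuallyEq
  filter_upwards [isOpen_Ioo.mem_nhds hx] with z hz
  have h1 : JKL S h lam0 δ κ τ ϑ₀ z = AA S h lam0 δ κ ϑ₀ τ z :=
    JKL_eq hS hlam0 hδ hκ0 hSh hϑ₀.1 (by have := hϑ₀.2; linarith) hz.1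
      (by have := hz.2; linarith)
  have h2 : AA S h lam0 δ κ ϑ₀ τ z = AA S h lam0 δ κ ϑ₀ τ ϑ₀ + ∫ σ in ϑ₀..z, Jd S h lam0 δ κ ϑ₀ σ := by
    rcases le_or_gt ϑ₀ z with hle | hlt
    · have := A_diff_le (ϑ₀ := ϑ₀) hS hlam0 hδ hκ0 hSh hϑ₀ hz hle
      linarith
    · have := A_diff_le (ϑ₀ := ϑ₀) hS hlam0 hδ hκ0 hSh hz hϑ₀ hlt.le
      rw [intervalIntegral.integral_symm]
      linarith
  rw [h1, h2]

end Aux3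

theorem stmt_7 (S lam0 δ τ κ α β ϑ₀ h : ℝ)
    (hS : 0 < S) (hlam0 : 0 < lam0) (hδ : 0 < δ) (hτ : 0 < τ)
    (hκ : κ ∈ Set.Ioo (0 : ℝ) (1 / 2)) (hαβ : α < β)
    (hΘ : Set.Ioo (α - δ) (β + δ) ⊆ Set.Ioo 0 (τ - δ))
    (hϑ₀ : ϑ₀ ∈ Set.Ioo α β)
    (hH : S / Real.log (1 + S / lam0) - S - lam0 < h) :
    (∀ ϑ ∈ Set.Ioc ϑ₀ (ϑ₀ + δ),
      ∃ J' : ℝ → ℝ,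
        (∀ x ∈ Set.Ioo (α - δ) (β + δ), HasDerivAt (JKL S h lam0 δ κ τ ϑ₀) (J' x) x) ∧
        HasDerivAt J'
          ((S * (S + h) * κ ^ 2 / δ) *
            ∫ x in (0 : ℝ)..(1 - (ϑ - ϑ₀) / δ),
              x ^ (κ - 1) * (x + (ϑ - ϑ₀) / δ) ^ (κ - 1) / (S * x ^ κ + lam0)) ϑ) ∧
    (∀ ϑ ∈ Set.Ioo (α - δ) (β + δ), (ϑ < ϑ₀ - δ ∨ ϑ₀ + δ < ϑ) →
      ∃ J' : ℝ → ℝ,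
        (∀ x ∈ Set.Ioo (α - δ) (β + δ), HasDerivAt (JKL S h lam0 δ κ τ ϑ₀) (J' x) x) ∧
        HasDerivAt J' 0 ϑ) := by
  obtain ⟨hκ0, hκhalf⟩ := hκ
  have hκ1 : κ < 1 := by linarith
  have hdivpos : 0 < S / lam0 := div_pos hS hlam0
  have hlog1 : 0 < Real.log (1 + S / lam0) := Real.log_pos (by linarith)
  have hlog2 : Real.log (1 + S / lam0) < S / lam0 := by
    have := Real.log_lt_sub_one_of_pos (by linarith : (0:ℝ) < 1 + S / lam0)
      (by intro hc; have : S / lam0 = 0 := by linarith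
          linarith)
    linarith
  have hgt : lam0 < S / Real.log (1 + S / lam0) := by
    rw [lt_div_iff₀ hlog1]
    have h2 : lam0 * Real.log (1 + S / lam0) < lam0 * (S / lam0) :=
      mul_lt_mul_of_pos_left hlog2 hlam0
    have h3 : lam0 * (S / lam0) = S := by field_simp
    linarith
  have hSh : 0 < S + h := by linarith
  have hϑ₀Θ : ϑ₀ ∈ Set.Ioo (α - δ) (β + δ) :=
    ⟨by have := hϑ₀.1; linarith, by have := hϑ₀.2; linarith⟩
  have hϑ₀U : ϑ₀ ∈ Set.Ioo 0 (τ - δ) := hΘ hϑ₀Θ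
  have hmain : ∀ x ∈ Set.Ioo (α - δ) (β + δ),
      HasDerivAt (JKL S h lam0 δ κ τ ϑ₀) (Jd S h lam0 δ κ ϑ₀ x) x :=
    fun x hx => hasDerivAt_JKL hS hlam0 hδ hκ0 hSh hϑ₀U (hΘ hx)
  constructor
  · intro ϑ hϑmem
    obtain ⟨hϑ1, hϑ2⟩ := hϑmem
    refine ⟨Jd S h lam0 δ κ ϑ₀, hmain, ?_⟩
    have hs0 : 0 < ϑ - ϑ₀ := by linarith
    have hs1 : ϑ - ϑ₀ ≤ δ := by linarith
    have hNN := hasDerivAt_NN hS hlam0 hδ hκ0 hκ1 hs0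
    have hshift : HasDerivAt (fun σ => NN S lam0 δ κ (σ - ϑ₀)) (inn S lam0 δ κ (ϑ - ϑ₀)) ϑ := by
      have := hNN.comp ϑ ((hasDerivAt_id ϑ).sub_const ϑ₀)
      exact this.congr_deriv (mul_one _)
    have hJd : HasDerivAt (Jd S h lam0 δ κ ϑ₀) ((S + h) * inn S lam0 δ κ (ϑ - ϑ₀)) ϑ := by
      unfold Jd
      exact (hshift.const_mul (S + h)).const_add _
    have heval := inn_eval hS hlam0 hδ hκ0 hκ1 hs0 hs1
    convert hJd using 1
    rw [heval]
    ring
  · intro ϑ hϑmem hside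
    refine ⟨Jd S h lam0 δ κ ϑ₀, hmain, ?_⟩
    have hNN0 : HasDerivAt (NN S lam0 δ κ) 0 (ϑ - ϑ₀) := by
      apply hasDerivAt_NN_zero hS hlam0 hδ hκ0
      rcases hside with hl | hr
      · right; linarith
      · left; linarith
    have hshift : HasDerivAt (fun σ => NN S lam0 δ κ (σ - ϑ₀)) 0 ϑ := by
      have := hNN0.comp ϑ ((hasDerivAt_id ϑ).sub_const ϑ₀)
      exact this.congr_deriv (mul_one _)
    have : HasDerivAt (Jd S h lam0 δ κ ϑ₀) ((S + h) * 0) ϑ := by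
      unfold Jd
      exact (hshift.const_mul (S + h)).const_add _
    simpa using this
end Aux2
end Aux
end

section
/- Define ψ̃ : ℝ → ℝ by ψ̃(x) = S·(1 − (x/δ)^κ) + λ₀ for x ≥ δ and ψ̃(x) = λ₀ for x < δ. Then for every ϑ and every t, λ(ϑ, t) = S·(max((t − ϑ)/δ, 0))^κ + ψ̃(t − ϑ); moreover ψ̃ is Lipschitz continuous with Lipschitz constant S·κ/δ, i.e. |ψ̃(x) − ψ̃(y)| ≤ (S·κ/δ)·|x − y| for all real x, y. -/
open MeasureTheory Real Set Filter

/-- The Lipschitz part of the theoretical intensity. -/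
noncomputable def psiTilde (S lam0 δ κ : ℝ) (x : ℝ) : ℝ :=
  if δ ≤ x then S * (1 - (x / δ) ^ κ) + lam0 else lam0

lemma key_rpow (κ : ℝ) (hκ0 : 0 ≤ κ) (hκ1 : κ ≤ 1) {a b : ℝ} (ha : 1 ≤ a) (hab : a ≤ b) :
    b ^ κ - a ^ κ ≤ κ * (b - a) := by
  have ha0 : (0:ℝ) < a := lt_of_lt_of_le one_pos ha
  set s : ℝ := (b - a) / a with hs
  have hs0 : 0 ≤ s := div_nonneg (by linarith) ha0.le
  have hb : b = a * (1 + s) := by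
    rw [hs, mul_add, mul_one, mul_div_assoc', mul_comm a (b - a), mul_div_assoc, div_self ha0.ne', mul_one]; ring
  have hber : (1 + s) ^ κ ≤ 1 + κ * s :=
    rpow_one_add_le_one_add_mul_self (by linarith) hκ0 hκ1
  have hmul : b ^ κ = a ^ κ * (1 + s) ^ κ := by
    rw [hb, Real.mul_rpow ha0.le (by linarith)]
  have haκ : a ^ κ ≤ a := by
    calc a ^ κ ≤ a ^ (1:ℝ) := Real.rpow_le_rpow_of_exponent_le ha hκ1
    _ = a := Real.rpow_one a
  have haκ0 : 0 < a ^ κ := Real.rpow_pos_of_pos ha0 κ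
  have h1 : b ^ κ ≤ a ^ κ + κ * (a ^ κ * s) := by
    rw [hmul]; nlinarith
  have h2 : a ^ κ * s ≤ b - a := by
    rw [hs]
    rw [div_eq_mul_inv, ← mul_assoc]
    have : a ^ κ * (b - a) ≤ a * (b - a) := by nlinarith
    calc a ^ κ * (b - a) * a⁻¹ ≤ a * (b - a) * a⁻¹ := by
          apply mul_le_mul_of_nonneg_right this (inv_nonneg.mpr ha0.le)
      _ = b - a := by field_simp
  nlinarith

lemma lip_half (S lam0 δ κ : ℝ) (hS : 0 < S) (hδ : 0 < δ) (hκ0 : 0 < κ) (hκ1 : κ ≤ 1)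
    {x y : ℝ} (hxy : x ≤ y) :
    |psiTilde S lam0 δ κ x - psiTilde S lam0 δ κ y| ≤ S * κ / δ * |x - y| := by
  have habs : |x - y| = y - x := by rw [abs_sub_comm]; exact abs_of_nonneg (by linarith)
  unfold psiTilde
  by_cases hy : δ ≤ y
  · by_cases hx : δ ≤ x
    · rw [if_pos hx, if_pos hy]
      have ha1 : 1 ≤ x / δ := (one_le_div hδ).mpr hx
      have hab : x / δ ≤ y / δ := by gcongr
      have hkey := key_rpow κ hκ0.le hκ1 ha1 hab
      have hmono : (x / δ) ^ κ ≤ (y / δ) ^ κ :=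
        Real.rpow_le_rpow (by positivity) hab hκ0.le
      have hval : S * (1 - (x / δ) ^ κ) + lam0 - (S * (1 - (y / δ) ^ κ) + lam0)
          = S * ((y / δ) ^ κ - (x / δ) ^ κ) := by ring
      rw [hval, habs, abs_of_nonneg (by nlinarith)]
      have h3 : y / δ - x / δ = (y - x) / δ := by ring
      rw [h3] at hkey
      calc S * ((y / δ) ^ κ - (x / δ) ^ κ) ≤ S * (κ * ((y - x) / δ)) := by nlinarith
        _ = S * κ / δ * (y - x) := by ring
    · rw [if_neg hx, if_pos hy]
      push_neg at hx
      have hb1 : 1 ≤ y / δ := (one_le_div hδ).mpr hy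
      have hkey := key_rpow κ hκ0.le hκ1 le_rfl hb1
      simp only [Real.one_rpow] at hkey
      have hval : lam0 - (S * (1 - (y / δ) ^ κ) + lam0) = S * ((y / δ) ^ κ - 1) := by ring
      have hyk : 1 ≤ (y / δ) ^ κ := Real.one_le_rpow hb1 hκ0.le
      rw [hval, habs, abs_of_nonneg (by nlinarith)]
      have h2 : y / δ - 1 = (y - δ) / δ := by field_simp
      rw [h2] at hkey
      have h4 : κ * ((y - δ) / δ) ≤ κ * ((y - x) / δ) := by gcongr <;> linarith
      calc S * ((y / δ) ^ κ - 1) ≤ S * (κ * ((y - x) / δ)) := by nlinarith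
        _ = S * κ / δ * (y - x) := by ring
  · have hx : ¬ δ ≤ x := fun h => hy (le_trans h hxy)
    rw [if_neg hx, if_neg hy, sub_self, abs_zero]
    positivity

theorem stmt_14 (S lam0 δ τ κ α β : ℝ)
    (hS : 0 < S) (hlam0 : 0 < lam0) (hδ : 0 < δ) (hτ : 0 < τ)
    (hκ : κ ∈ Set.Ioo (0 : ℝ) (1 / 2)) (hαβ : α < β)
    (hΘ : Set.Ioo (α - δ) (β + δ) ⊆ Set.Ioo 0 (τ - δ)) :
    (∀ ϑ t : ℝ,
      lamT S lam0 δ κ ϑ t =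
        S * (max ((t - ϑ) / δ) 0) ^ κ + psiTilde S lam0 δ κ (t - ϑ)) ∧
    (∀ x y : ℝ,
      |psiTilde S lam0 δ κ x - psiTilde S lam0 δ κ y| ≤ S * κ / δ * |x - y|) := by
  obtain ⟨hκ0, hκ2⟩ := hκ
  constructor
  · intro ϑ t
    set x := t - ϑ with hx
    unfold lamT psi psiTilde
    by_cases h1 : δ ≤ x
    · rw [if_pos h1, if_pos h1]
      have hm : max (x / δ) 0 = x / δ := max_eq_left (div_nonneg (by linarith) hδ.le)
      rw [hm]; try ring
    · rw [if_neg h1, if_neg h1]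
      by_cases h2 : 0 < x
      · rw [if_pos h2]
        have hm : max (x / δ) 0 = x / δ := max_eq_left (div_nonneg h2.le hδ.le)
        rw [hm]; try ring
      · rw [if_neg h2]
        push_neg at h2
        have : max (x / δ) 0 = 0 := max_eq_right (div_nonpos_of_nonpos_of_nonneg h2 hδ.le)
        rw [this, Real.zero_rpow (ne_of_gt hκ0)]; try ring
  · intro x y
    rcases le_total x y with h | h
    · exact lip_half S lam0 δ κ hS hδ hκ0 (by linarith) h
    · rw [abs_sub_comm, abs_sub_comm x y]
      exact lip_half S lam0 δ κ hS hδ hκ0 (by linarith) h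
end

section
/- Let Γ_κ = ∫_{−∞}^{+∞} ((v − 1)₊^κ − v₊^κ)² dv, which is finite, and set H = κ + 1/2. Then for all real u₁ and u₂, ∫_{−∞}^{+∞} ((v − u₁)₊^κ − v₊^κ)·((v − u₂)₊^κ − v₊^κ) dv = (Γ_κ/2)·(|u₁|^{2H} + |u₂|^{2H} − |u₁ − u₂|^{2H}); in particular, the normalized kernel family u ↦ Γ_κ^{−1/2}·((· − u)₊^κ − (·)₊^κ) in L²(ℝ) reproduces the covariance of a fractional Brownian motion with Hurst parameter H. -/
open MeasureTheory Real Set Filter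

noncomputable def Kf (κ u : ℝ) : ℝ → ℝ := fun v => (max (v - u) 0) ^ κ - (max v 0) ^ κ

lemma Kf_cont {κ : ℝ} (hκ : 0 < κ) (u : ℝ) : Continuous (Kf κ u) := by
  have h : Continuous fun v : ℝ => (max v 0) ^ κ := by
    rw [continuous_iff_continuousAt]
    intro x
    exact (Real.continuousAt_rpow_const _ _ (Or.inr hκ.le)).comp
      ((continuous_id.max continuous_const).continuousAt)
  exact (h.comp (continuous_id.sub continuous_const)).sub h

lemma Kf_bound {κ : ℝ} (hκ0 : 0 < κ) (hκ1 : κ < 1) {v : ℝ} (hv : 2 ≤ v) :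
    |Kf κ 1 v| ≤ (v / 2) ^ (κ - 1) := by
  have hv2 : (0:ℝ) < v / 2 := by linarith
  have hkey : ∀ x ∈ Icc (v - 1) v, HasDerivWithinAt (fun x : ℝ => x ^ κ)
      (κ * x ^ (κ - 1)) (Icc (v - 1) v) x := by
    intro x hx
    have hx0 : x ≠ 0 := by
      have := hx.1; intro h; rw [h] at this; linarith
    exact (Real.hasDerivAt_rpow_const (Or.inl hx0)).hasDerivWithinAt
  have hbound : ∀ x ∈ Ico (v - 1) v, ‖κ * x ^ (κ - 1)‖ ≤ (v / 2) ^ (κ - 1) := by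
    intro x hx
    have hx1 : v / 2 ≤ x := by have := hx.1; linarith
    have hxpos : (0:ℝ) < x := lt_of_lt_of_le hv2 hx1
    have h1 : x ^ (κ - 1) ≤ (v / 2) ^ (κ - 1) :=
      Real.rpow_le_rpow_of_nonpos hv2 hx1 (by linarith)
    have h2 : (0:ℝ) ≤ x ^ (κ - 1) := Real.rpow_nonneg hxpos.le _
    rw [Real.norm_eq_abs, abs_mul, abs_of_pos hκ0, abs_of_nonneg h2]
    calc κ * x ^ (κ - 1) ≤ 1 * (v / 2) ^ (κ - 1) := by
          apply mul_le_mul hκ1.le h1 h2 zero_le_one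
      _ = (v / 2) ^ (κ - 1) := one_mul _
  have := norm_image_sub_le_of_norm_deriv_le_segment' hkey hbound v
    (right_mem_Icc.mpr (by linarith))
  have h2 : max (v - 1) 0 = v - 1 := max_eq_left (by linarith)
  have h3 : max v 0 = v := max_eq_left (by linarith)
  rw [Real.norm_eq_abs] at this
  have h4 : v - (v - 1) = 1 := by ring
  rw [h4, mul_one] at this
  rw [Kf, h2, h3]
  rw [abs_sub_comm] at this
  exact this

lemma Kf_int_sq_one {κ : ℝ} (hκ : κ ∈ Set.Ioo (0 : ℝ) (1 / 2)) :
    Integrable (fun v => (Kf κ 1 v) ^ 2) := by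
  obtain ⟨hκ0, hκ1⟩ := hκ
  have hcont : Continuous fun v => (Kf κ 1 v) ^ 2 := (Kf_cont hκ0 1).pow 2
  rw [← integrableOn_univ]
  have hunion : (univ : Set ℝ) ⊆ Iic 0 ∪ (Icc 0 2 ∪ Ioi 2) := by
    intro x _
    rcases le_or_gt x 0 with h | h
    · exact Or.inl h
    rcases le_or_gt x 2 with h2 | h2
    · exact Or.inr (Or.inl ⟨h.le, h2⟩)
    · exact Or.inr (Or.inr h2)
  apply IntegrableOn.mono_set _ hunion
  apply IntegrableOn.union
  · -- on Iic 0, the function is 0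
    have : EqOn (fun v => (Kf κ 1 v) ^ 2) (fun _ => (0:ℝ)) (Iic 0) := by
      intro x hx
      simp only [Kf]
      have h1 : max (x - 1) 0 = 0 := max_eq_right (by simp at hx ⊢; linarith)
      have h2 : max x 0 = 0 := max_eq_right (by simpa using hx)
      rw [h1, h2]
      simp
    exact (integrableOn_congr_fun this measurableSet_Iic).mpr
      ((integrableOn_const_iff).mpr (Or.inl (by simp)))
  apply IntegrableOn.union
  · exact hcont.continuousOn.integrableOn_Icc
  · -- on Ioi 2, dominate by 2^(2-2κ) * v^(2κ-2)
    have hdom : IntegrableOn (fun v : ℝ => 2 ^ (2 - 2*κ) * v ^ (2*κ - 2)) (Ioi 2) := by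
      exact (integrableOn_Ioi_rpow_of_lt (by linarith) two_pos).const_mul _
    apply hdom.mono' (hcont.aestronglyMeasurable.restrict)
    rw [ae_restrict_iff' measurableSet_Ioi]
    refine ae_of_all _ fun v hv => ?_
    have hv2 : (2:ℝ) ≤ v := (le_of_lt hv)
    have hv0 : (0:ℝ) < v := by linarith
    have hb := Kf_bound hκ0 (by linarith) hv2
    have hkf : |Kf κ 1 v| ^ 2 ≤ ((v / 2) ^ (κ - 1)) ^ 2 := by
      apply pow_le_pow_left₀ (abs_nonneg _) hb
    have heq : ((v / 2) ^ (κ - 1)) ^ 2 = 2 ^ (2 - 2*κ) * v ^ (2*κ - 2) := by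
      have h1 : ((v / 2) ^ (κ - 1)) ^ (2:ℕ) = (v / 2) ^ ((κ - 1) * 2) := by
        rw [Real.rpow_mul (by linarith), Real.rpow_two]
      rw [h1]
      rw [Real.div_rpow hv0.le (by norm_num)]
      rw [div_eq_mul_inv, ← Real.rpow_neg (by norm_num)]
      rw [mul_comm]
      congr 1 <;> ring_nf
    calc ‖Kf κ 1 v ^ 2‖ = |Kf κ 1 v| ^ 2 := by rw [Real.norm_eq_abs, abs_pow]
      _ ≤ ((v / 2) ^ (κ - 1)) ^ 2 := hkf
      _ = 2 ^ (2 - 2*κ) * v ^ (2*κ - 2) := heq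

lemma Kf_scale {κ : ℝ} (hκ0 : 0 < κ) {u : ℝ} (hu : 0 < u) (v : ℝ) :
    Kf κ u v = u ^ κ * Kf κ 1 (u⁻¹ * v) := by
  have key : ∀ x : ℝ, u ^ κ * (max x 0) ^ κ = (max (u * x) 0) ^ κ := by
    intro x
    rw [← Real.mul_rpow hu.le (le_max_right _ _)]
    congr 1
    rw [mul_max_of_nonneg _ _ hu.le, mul_zero]
  simp only [Kf, mul_sub, key]
  have h2 : u * (u⁻¹ * v) = v := by field_simp
  rw [h2, mul_one]

lemma Kf_neg_eq {κ u : ℝ} (v : ℝ) : Kf κ u v = -Kf κ (-u) (v - u) := by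
  simp only [Kf]
  have h1 : v - u - -u = v := by ring
  rw [h1]
  ring

lemma Kf_int_sq {κ : ℝ} (hκ : κ ∈ Set.Ioo (0 : ℝ) (1 / 2)) (u : ℝ) :
    Integrable (fun v => (Kf κ u v) ^ 2) := by
  have hκ0 := hκ.1
  have hpos : ∀ w : ℝ, 0 < w → Integrable (fun v => (Kf κ w v) ^ 2) := by
    intro w hw
    have heq : (fun v => (Kf κ w v) ^ 2)
        = fun v => (w ^ κ) ^ 2 * (Kf κ 1 (w⁻¹ * v)) ^ 2 := by
      funext v
      rw [Kf_scale hκ0 hw, mul_pow]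
    rw [heq]
    exact (((Kf_int_sq_one hκ).const_mul _).comp_mul_left' (inv_ne_zero hw.ne'))
  rcases lt_trichotomy u 0 with h | h | h
  · have heq : (fun v => (Kf κ u v) ^ 2) = fun v => (Kf κ (-u) (v - u)) ^ 2 := by
      funext v
      rw [Kf_neg_eq v, neg_pow]
      ring
    rw [heq]
    exact (hpos (-u) (by linarith)).comp_sub_right u
  · subst h
    have heq : (fun v => (Kf κ 0 v) ^ 2) = fun _ => (0:ℝ) := by
      funext v; simp [Kf]
    rw [heq]
    exact integrable_zero _ _ _
  · exact hpos u h

lemma Kf_int_val {κ : ℝ} (hκ : κ ∈ Set.Ioo (0 : ℝ) (1 / 2)) (u : ℝ) :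
    (∫ v, (Kf κ u v) ^ 2) = |u| ^ (2*κ + 1) * ∫ v, (Kf κ 1 v) ^ 2 := by
  have hκ0 := hκ.1
  have hpos : ∀ w : ℝ, 0 < w →
      (∫ v, (Kf κ w v) ^ 2) = |w| ^ (2*κ + 1) * ∫ v, (Kf κ 1 v) ^ 2 := by
    intro w hw
    have heq : (fun v => (Kf κ w v) ^ 2)
        = fun v => (w ^ κ) ^ 2 * (Kf κ 1 (w⁻¹ * v)) ^ 2 := by
      funext v
      rw [Kf_scale hκ0 hw, mul_pow]
    rw [heq, MeasureTheory.integral_const_mul,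
      MeasureTheory.Measure.integral_comp_inv_mul_left (fun x => (Kf κ 1 x) ^ 2) w,
      smul_eq_mul, ← mul_assoc, abs_of_pos hw]
    congr 1
    rw [← Real.rpow_natCast (w ^ κ) 2, ← Real.rpow_mul hw.le,
      Real.rpow_add hw, Real.rpow_one]
    norm_num [mul_comm]
  rcases lt_trichotomy u 0 with h | h | h
  · have heq : (fun v => (Kf κ u v) ^ 2) = fun v => (Kf κ (-u) (v - u)) ^ 2 := by
      funext v
      rw [Kf_neg_eq v, neg_pow]
      ring
    rw [heq]
    rw [MeasureTheory.integral_sub_right_eq_self (fun v => (Kf κ (-u) v) ^ 2) u]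
    rw [hpos (-u) (by linarith), abs_neg]
  · subst h
    have heq : (fun v => (Kf κ 0 v) ^ 2) = fun _ => (0:ℝ) := by
      funext v; simp [Kf]
    rw [heq]
    simp [Real.zero_rpow (by positivity : 2*κ + 1 ≠ 0)]
  · exact hpos u h

lemma Kf_diff {κ u₁ u₂ : ℝ} (v : ℝ) :
    Kf κ u₁ v - Kf κ u₂ v = Kf κ (u₁ - u₂) (v - u₂) := by
  simp only [Kf]
  have h1 : v - u₂ - (u₁ - u₂) = v - u₁ := by ring
  rw [h1]
  ring

theorem stmt_19 (κ : ℝ) (hκ : κ ∈ Set.Ioo (0 : ℝ) (1 / 2)) :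
    MeasureTheory.Integrable
      (fun v : ℝ => ((max (v - 1) 0) ^ κ - (max v 0) ^ κ) ^ 2)
      MeasureTheory.volume ∧
    ∀ u₁ u₂ : ℝ,
      (∫ v : ℝ, ((max (v - u₁) 0) ^ κ - (max v 0) ^ κ) *
          ((max (v - u₂) 0) ^ κ - (max v 0) ^ κ)) =
        (∫ v : ℝ, ((max (v - 1) 0) ^ κ - (max v 0) ^ κ) ^ 2) / 2 *
          (|u₁| ^ (2 * (κ + 1 / 2)) + |u₂| ^ (2 * (κ + 1 / 2)) -
            |u₁ - u₂| ^ (2 * (κ + 1 / 2))) := by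
  constructor
  · exact Kf_int_sq hκ 1
  intro u₁ u₂
  have he : (2 * (κ + 1 / 2)) = 2*κ + 1 := by ring
  rw [he]
  have I₁ := Kf_int_sq hκ u₁
  have I₂ := Kf_int_sq hκ u₂
  have I₃ : Integrable (fun v => (Kf κ u₁ v - Kf κ u₂ v) ^ 2) := by
    have heq : (fun v => (Kf κ u₁ v - Kf κ u₂ v) ^ 2)
        = fun v => (Kf κ (u₁ - u₂) (v - u₂)) ^ 2 := by
      funext v; rw [Kf_diff]
    rw [heq]
    exact (Kf_int_sq hκ (u₁ - u₂)).comp_sub_right u₂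
  have hpt : (fun v : ℝ => ((max (v - u₁) 0) ^ κ - (max v 0) ^ κ) *
      ((max (v - u₂) 0) ^ κ - (max v 0) ^ κ))
      = fun v => ((Kf κ u₁ v) ^ 2 + (Kf κ u₂ v) ^ 2
          - (Kf κ u₁ v - Kf κ u₂ v) ^ 2) / 2 := by
    funext v
    simp only [Kf]
    ring
  have I12 : Integrable (fun v => (Kf κ u₁ v) ^ 2 + (Kf κ u₂ v) ^ 2) := I₁.add I₂
  rw [hpt]
  rw [integral_div, integral_sub I12 I₃, integral_add I₁ I₂]
  have h3 : (∫ v, (Kf κ u₁ v - Kf κ u₂ v) ^ 2)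
      = ∫ v, (Kf κ (u₁ - u₂) v) ^ 2 := by
    have heq : (fun v => (Kf κ u₁ v - Kf κ u₂ v) ^ 2)
        = fun v => (Kf κ (u₁ - u₂) (v - u₂)) ^ 2 := by
      funext v; rw [Kf_diff]
    rw [heq]
    exact MeasureTheory.integral_sub_right_eq_self (fun v => (Kf κ (u₁ - u₂) v) ^ 2) u₂
  rw [h3, Kf_int_val hκ u₁, Kf_int_val hκ u₂, Kf_int_val hκ (u₁ - u₂)]
  have hΓ : (∫ v : ℝ, ((max (v - 1) 0) ^ κ - (max v 0) ^ κ) ^ 2)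
      = ∫ v, (Kf κ 1 v) ^ 2 := rfl
  rw [hΓ]
  ring
end
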